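/- arXiv:1403.0359 — 7 statements merged into one kernel-verified Lean document; each statement's English description precedes it below -/
import Mathlib

section
/- Let G be a claw-free graph and let I and J be independent sets in G. Then every connected component of the induced subgraph G[I △ J] (on the symmetric difference of I and J) is either a path or a cycle of even length. -/
open SimpleGraph

/-- A graph is claw-free if no vertex has three pairwise nonadjacent neighbors. -/
def ClawFree {V : Type} (G : SimpleGraph V) : Prop :=
  ¬ ∃ v a b c : V, G.Adj v a ∧ G.Adj v b ∧ G.Adj v c ∧
    a ≠ b ∧ a ≠ c ∧ b ≠ c ∧ ¬G.Adj a b ∧ ¬G.Adj a c ∧ ¬G.Adj b c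

/-- `s` is an independent set of `G`. -/
def Indep {V : Type} (G : SimpleGraph V) (s : Set V) : Prop :=
  ∀ u ∈ s, ∀ v ∈ s, ¬G.Adj u v

/-- Token sliding step between independent sets. -/
def TSStep {V : Type} (G : SimpleGraph V) (I J : Set V) : Prop :=
  Indep G I ∧ Indep G J ∧ ∃ u v : V, G.Adj u v ∧ I \ J = {u} ∧ J \ I = {v}

/-- Token jumping step between independent sets. -/
def TJStep {V : Type} (G : SimpleGraph V) (I J : Set V) : Prop :=
  Indep G I ∧ Indep G J ∧ ∃ u v : V, I \ J = {u} ∧ J \ I = {v}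

/-- Reachability under token sliding. -/
def TSReach {V : Type} (G : SimpleGraph V) : Set V → Set V → Prop :=
  Relation.ReflTransGen (TSStep G)

/-- Reachability under token jumping. -/
def TJReach {V : Type} (G : SimpleGraph V) : Set V → Set V → Prop :=
  Relation.ReflTransGen (TJStep G)

/-- The neighbors of `v` inside the set `B`. -/
def nbrsIn {V : Type} (G : SimpleGraph V) (B : Set V) (v : V) : Set V :=
  {u ∈ B | G.Adj v u}

/-- `Nset G B i` is the set `N_i(B)` of vertices outside `B` with exactly `i` neighbors in `B`. -/
def Nset {V : Type} (G : SimpleGraph V) (B : Set V) (i : ℕ) : Set V :=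
  {v | v ∉ B ∧ (nbrsIn G B v).ncard = i}

/-- The neighborhood of a set. -/
def Nbhd {V : Type} (G : SimpleGraph V) (S : Set V) : Set V :=
  {w | ∃ u ∈ S, G.Adj w u}

/-- An `I`-bad cycle: a chordless `I`-alternating cycle `c 0, c 1, …, c (2n-1), c 0`
with `c j ∈ I` exactly for even `j`. -/
def IsBadCycle {V : Type} (G : SimpleGraph V) (I : Set V) (n : ℕ) (c : ZMod (2*n) → V) : Prop :=
  2 ≤ n ∧ Function.Injective c ∧
  (∀ j : ZMod (2*n), G.Adj (c j) (c (j + 1))) ∧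
  (∀ i j : ZMod (2*n), G.Adj (c i) (c j) → j = i + 1 ∨ i = j + 1) ∧
  (∀ j : ZMod (2*n), c j ∈ I ↔ Even (ZMod.val j))

/-- The part `A = V(C) ∩ I` of the `I`-bipartition of a bad cycle. -/
def cycA {V : Type} {n : ℕ} (c : ZMod (2*n) → V) : Set V :=
  c '' {j | Even (ZMod.val j)}

/-- The part `B = V(C) \ I` of the `I`-bipartition of a bad cycle. -/
def cycB {V : Type} {n : ℕ} (c : ZMod (2*n) → V) : Set V :=
  c '' {j | ¬ Even (ZMod.val j)}

/-- The bad cycle `c` is resolvable with respect to `I`. -/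
def Resolvable {V : Type} (G : SimpleGraph V) (I : Set V) {n : ℕ} (c : ZMod (2*n) → V) : Prop :=
  ∃ I' : Set V, TSReach G I I' ∧ (G.induce (I' ∪ cycB c)).IsAcyclic

/-- A vertex is free w.r.t. `I` if it is outside `I` and has at most one neighbor in `I`. -/
def FreeVert {V : Type} (G : SimpleGraph V) (I : Set V) (v : V) : Prop :=
  v ∉ I ∧ (nbrsIn G I v).ncard ≤ 1

/-- An `I`-augmenting path `x 0, x 1, …, x (2k)`: an `I`-alternating chordless path of
length `2k ≥ 2` whose endpoints are free vertices. -/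
def IsAugPath {V : Type} (G : SimpleGraph V) (I : Set V) (k : ℕ) (x : Fin (2*k+1) → V) : Prop :=
  1 ≤ k ∧ Function.Injective x ∧
  (∀ j : Fin (2*k), G.Adj (x j.castSucc) (x j.succ)) ∧
  (∀ i j : Fin (2*k+1), G.Adj (x i) (x j) → i.val + 1 = j.val ∨ j.val + 1 = i.val) ∧
  (∀ j : Fin (2*k+1), x j ∈ I ↔ Odd j.val) ∧
  FreeVert G I (x 0) ∧ FreeVert G I (x (Fin.last (2*k)))

section Helpers
variable {W : Type}

lemma supp_closed (H : SimpleGraph W) (c : H.ConnectedComponent) {x y : W}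
    (hx : x ∈ c.supp) (hxy : H.Adj x y) : y ∈ c.supp := by
  rw [ConnectedComponent.mem_supp_iff] at *
  rw [← hx]
  exact ConnectedComponent.sound hxy.symm.reachable

lemma walk_closed (H : SimpleGraph W) (s : Set W)
    (hcl : ∀ x y, x ∈ s → H.Adj x y → y ∈ s) {u v : W} (p : H.Walk u v)
    (hu : u ∈ s) : v ∈ s := by
  induction p with
  | nil => exact hu
  | cons h q ih => exact ih (hcl _ _ hu h)

lemma reachable_induce_of_closed (H : SimpleGraph W) (s : Set W)
    {u v : W} (p : H.Walk u v) : ∀ (hu : u ∈ s) (hv : v ∈ s)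
    (hcl : ∀ x ∈ p.support, x ∈ s), (H.induce s).Reachable ⟨u, hu⟩ ⟨v, hv⟩ := by
  induction p with
  | nil => intro hu hv _; rfl
  | @cons a b c h q ih =>
    intro hu hv hcl
    have hb : b ∈ s := hcl b (by simp)
    have h1 : (H.induce s).Adj ⟨a, hu⟩ ⟨b, hb⟩ := h
    exact h1.reachable.trans (ih hb hv (fun x hx => hcl x (by simp [hx])))

lemma induce_supp_connected (H : SimpleGraph W) (c : H.ConnectedComponent) :
    (H.induce c.supp).Connected := by
  classical
  obtain ⟨v, hv⟩ := c.exists_rep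
  have hvc : v ∈ c.supp := by rw [ConnectedComponent.mem_supp_iff]; exact hv
  have : Nonempty ↥c.supp := ⟨⟨v, hvc⟩⟩
  refine ⟨?_⟩
  rintro ⟨x, hx⟩ ⟨y, hy⟩
  have hxy : H.Reachable x y := by
    rw [ConnectedComponent.mem_supp_iff] at hx hy
    exact ConnectedComponent.exact (hx.trans hy.symm)
  obtain ⟨p⟩ := hxy
  refine reachable_induce_of_closed H c.supp p hx hy (fun z hz => ?_)
  exact walk_closed H c.supp (fun a b ha hab => supp_closed H c ha hab)
    (p.takeUntil z hz) hx

lemma val_image_neighborSet_induce (H : SimpleGraph W) (s : Set W) (x : ↥s) :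
    Subtype.val '' ((H.induce s).neighborSet x) = H.neighborSet x.val ∩ s := by
  ext y
  constructor
  · rintro ⟨⟨y', hy'⟩, hadj, rfl⟩
    exact ⟨hadj, hy'⟩
  · rintro ⟨hadj, hy⟩
    exact ⟨⟨y, hy⟩, hadj, rfl⟩

lemma ncard_neighborSet_induce (H : SimpleGraph W) (s : Set W) (x : ↥s) :
    ((H.induce s).neighborSet x).ncard = (H.neighborSet x.val ∩ s).ncard := by
  rw [← val_image_neighborSet_induce, Set.ncard_image_of_injective _ Subtype.val_injective]

lemma degree_eq_ncard [Fintype W] (H : SimpleGraph W) [DecidableRel H.Adj] (v : W) :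
    H.degree v = (H.neighborSet v).ncard := by
  rw [← card_neighborSet_eq_degree, ← Nat.card_coe_set_eq, Nat.card_eq_fintype_card]

end Helpers

section FinLemmas

lemma fin_sub_val_eq_one {n : ℕ} (hn : 3 ≤ n) (u v : Fin n) :
    (u - v).val = 1 ↔ (v.val + 1 = u.val ∨ (u.val = 0 ∧ v.val = n - 1)) := by
  have h1 := Fin.coe_int_sub_eq_ite u v
  have hu := u.isLt
  have hv := v.isLt
  have h2 : ((u - v).val : ℤ) = ((u - v : Fin n) : ℤ) := rfl
  constructor
  · intro h
    rw [h] at h2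
    split at h1 <;> omega
  · intro h
    have : ((u - v).val : ℤ) = 1 := by split at h1 <;> omega
    exact_mod_cast this

lemma cycleGraph_adj_iff {n : ℕ} (hn : 3 ≤ n) (u v : Fin n) :
    (cycleGraph n).Adj u v ↔ ((u.val + 1 = v.val ∨ v.val + 1 = u.val) ∨
      ((u.val = 0 ∧ v.val = n - 1) ∨ (v.val = 0 ∧ u.val = n - 1))) := by
  rw [cycleGraph_adj', fin_sub_val_eq_one hn, fin_sub_val_eq_one hn]
  tauto

lemma even_of_cycle_coloring {n : ℕ} (hn : 3 ≤ n) (d : Fin n → Bool)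
    (hd : ∀ i j, (cycleGraph n).Adj i j → d i ≠ d j) : Even n := by
  have key : ∀ k (hk : k < n), d ⟨k, hk⟩ = (xor (d ⟨0, by omega⟩) (decide (Odd k))) := by
    intro k
    induction k with
    | zero => intro hk; simp
    | succ m ih =>
      intro hk
      have hm : m < n := by omega
      have hadj : (cycleGraph n).Adj ⟨m, hm⟩ ⟨m + 1, hk⟩ := by
        rw [cycleGraph_adj_iff hn]; left; left; rfl
      have := hd _ _ hadj
      rw [ih hm] at this
      rcases Bool.eq_false_or_eq_true (d ⟨0, by omega⟩) with h0 | h0 <;>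
        rcases Classical.em (Odd m) with hm2 | hm2 <;>
        simp_all [Nat.odd_add_one, Nat.not_odd_iff_even, parity_simps]
  have hadj : (cycleGraph n).Adj ⟨n - 1, by omega⟩ ⟨0, by omega⟩ := by
    rw [cycleGraph_adj_iff hn]; right; right; exact ⟨rfl, rfl⟩
  have h2 := hd _ _ hadj
  rw [key (n-1) (by omega), key 0 (by omega)] at h2
  have hodd : Odd (n - 1) := by
    by_contra h
    simp [h] at h2
  obtain ⟨k, hk⟩ := hodd
  exact ⟨k + 1, by omega⟩

end FinLemmas


section PathIso

lemma exists_adj_of_two_le_card {W : Type} [Fintype W] (H : SimpleGraph W)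
    (hconn : H.Connected) (h2 : 2 ≤ Fintype.card W) (v : W) : ∃ w, H.Adj v w := by
  obtain ⟨u, hune⟩ := Fintype.exists_ne_of_one_lt_card (by omega) v
  obtain ⟨p⟩ := hconn.preconnected v u
  cases p with
  | nil => exact absurd rfl hune
  | cons hadj q => exact ⟨_, hadj⟩

theorem path_iso : ∀ (n : ℕ) (W : Type) [Fintype W] [DecidableEq W] (H : SimpleGraph W),
    Fintype.card W = n → H.Connected → (∀ w : W, (H.neighborSet w).ncard ≤ 2) →
    ∀ v : W, (H.neighborSet v).ncard ≤ 1 →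
    ∃ e : H ≃g pathGraph n, (e v).val = 0 ∧
      ∀ w : W, (H.neighborSet w).ncard ≤ 1 → w = v ∨ (e w).val + 1 = n := by
  intro n
  induction n with
  | zero =>
    intro W _ _ H hcard _ _ v _
    exact ((Fintype.card_eq_zero_iff.mp hcard).false v).elim
  | succ m IH =>
    intro W instF instD H hcard hconn hdeg v hv
    by_cases hm : m = 0
    · subst hm
      have huniq : ∀ x : W, x = v :=
        fun x => Fintype.card_le_one_iff.mp (le_of_eq hcard) x v
      refine ⟨⟨⟨fun _ => ⟨0, by omega⟩, fun _ => v, fun x => (huniq x).symm,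
        fun i => Fin.ext (by omega)⟩, ?_⟩, rfl, fun w _ => Or.inl (huniq w)⟩
      intro a b
      simp only [Equiv.coe_fn_mk, pathGraph_adj]
      constructor
      · omega
      · intro h
        rw [huniq a, huniq b] at h
        exact absurd h (H.irrefl)
    · have hm1 : 1 ≤ m := Nat.one_le_iff_ne_zero.mpr hm
      obtain ⟨w₀, hvw₀⟩ := exists_adj_of_two_le_card H hconn (by omega) v
      have hw₀v : w₀ ≠ v := hvw₀.ne'
      have hnbrv : H.neighborSet v = {w₀} :=
        Set.eq_singleton_iff_unique_mem.mpr ⟨hvw₀,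
          fun x hx => (Set.ncard_le_one (Set.toFinite _)).mp hv x hx w₀ hvw₀⟩
      set s : Set W := {x : W | x ≠ v} with hs
      have hmem : ∀ x : W, x ∈ s ↔ x ≠ v := fun x => Iff.rfl
      set H' : SimpleGraph ↥s := H.induce s with hH'
      have hcard' : Fintype.card ↥s = m := by
        rw [Set.card_ne_eq, hcard]; omega
      -- connectivity of H'
      have hreachw₀ : ∀ x : W, ∀ hx : x ≠ v, H'.Reachable ⟨w₀, hw₀v⟩ ⟨x, hx⟩ := by
        set R : Set W := {x : W | x = v ∨ ∃ hx : x ≠ v, H'.Reachable ⟨w₀, hw₀v⟩ ⟨x, hx⟩}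
          with hR
        have hcl : ∀ x y, x ∈ R → H.Adj x y → y ∈ R := by
          intro x y hx hxy
          by_cases hyv : y = v
          · exact Or.inl hyv
          · refine Or.inr ⟨hyv, ?_⟩
            rcases hx with hx | ⟨hxv, hre⟩
            · subst hx
              have : y ∈ H.neighborSet x := hxy
              rw [hnbrv] at this
              rw [Set.mem_singleton_iff] at this
              subst this
              exact Reachable.refl _
            · have hadj' : H'.Adj ⟨x, hxv⟩ ⟨y, hyv⟩ := hxy
              exact hre.trans hadj'.reachable
        have hRuniv : ∀ x : W, x ∈ R := by
          intro x
          obtain ⟨p⟩ := hconn.preconnected v x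
          exact walk_closed H R hcl p (Or.inl rfl)
        intro x hx
        rcases hRuniv x with h | ⟨_, hre⟩
        · exact absurd h hx
        · exact hre
      have hconn' : H'.Connected := by
        have : Nonempty ↥s := ⟨⟨w₀, hw₀v⟩⟩
        refine ⟨?_⟩
        rintro ⟨x, hx⟩ ⟨y, hy⟩
        exact (hreachw₀ x hx).symm.trans (hreachw₀ y hy)
      have hdeg' : ∀ x : ↥s, (H'.neighborSet x).ncard ≤ 2 := by
        intro x
        rw [hH', ncard_neighborSet_induce]
        exact le_trans (Set.ncard_le_ncard Set.inter_subset_left (Set.toFinite _)) (hdeg x.val)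
      have hsub : ∀ x : W, H.neighborSet x ∩ s = H.neighborSet x \ {v} := by
        intro x
        ext y
        simp [hmem]
      have hw₀deg : (H'.neighborSet ⟨w₀, hw₀v⟩).ncard ≤ 1 := by
        rw [hH', ncard_neighborSet_induce, hsub,
          Set.ncard_diff_singleton_of_mem (show v ∈ H.neighborSet w₀ from hvw₀.symm)]
        have := hdeg w₀
        omega
      obtain ⟨e', he'0, he'last⟩ := IH ↥s H' hcard' hconn' hdeg' ⟨w₀, hw₀v⟩ hw₀deg
      -- build the equivalence
      set f : W → Fin (m + 1) :=
        fun x => if h : x = v then (0 : Fin (m + 1)) else (e' ⟨x, h⟩).succ with hf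
      set g : Fin (m + 1) → W :=
        fun i => Fin.cases v (fun j => (e'.symm j).val) i with hg
      have hfv : f v = 0 := by rw [hf]; simp
      have hfne : ∀ (x : W) (h : x ≠ v), f x = (e' ⟨x, h⟩).succ := by
        intro x h; rw [hf]; simp [h]
      have hval : ∀ (x : W) (h : x ≠ v), (f x).val = (e' ⟨x, h⟩).val + 1 := by
        intro x h; rw [hfne x h]; rfl
      have hlinv : Function.LeftInverse g f := by
        intro x
        by_cases h : x = v
        · rw [h, hfv, hg]; simp
        · rw [hfne x h, hg]; simp
      have hrinv : Function.RightInverse g f := by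
        intro i
        induction i using Fin.cases with
        | zero =>
          have h1 : g 0 = v := by rw [hg]; simp
          rw [h1, hfv]
        | succ j =>
          have hgj : g j.succ = (e'.symm j).val := by rw [hg]; simp
          have hne : (e'.symm j).val ≠ v := (e'.symm j).prop
          rw [hgj, hfne _ hne]
          congr 1
          have h2 : (⟨(e'.symm j).val, hne⟩ : ↥s) = e'.symm j := rfl
          rw [h2]
          exact e'.apply_symm_apply j
      have hadjvb : ∀ b : W, H.Adj v b ↔ b = w₀ := by
        intro b
        constructor
        · intro h
          have h2 : b ∈ H.neighborSet v := h
          rw [hnbrv] at h2; exact h2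
        · rintro rfl; exact hvw₀
      have key : ∀ a b : W, (pathGraph (m + 1)).Adj (f a) (f b) ↔ H.Adj a b := by
        intro a b
        rw [pathGraph_adj]
        by_cases ha : a = v <;> by_cases hb : b = v
        · rw [ha, hb, hfv]
          simp only [Fin.val_zero, H.irrefl, iff_false]
          omega
        · rw [ha, hfv, hval b hb, hadjvb b]
          simp only [Fin.val_zero]
          constructor
          · intro h
            have h0 : (e' ⟨b, hb⟩).val = 0 := by omega
            have h1 : e' ⟨b, hb⟩ = e' ⟨w₀, hw₀v⟩ := Fin.ext (by omega)
            exact congrArg Subtype.val (e'.injective h1)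
          · intro hb2
            left
            have h5 : (⟨b, hb⟩ : ↥s) = ⟨w₀, hw₀v⟩ := Subtype.ext hb2
            rw [h5, he'0]
        · rw [hb, hfv, hval a ha]
          have hr : H.Adj a v ↔ a = w₀ := by
            rw [H.adj_comm, hadjvb a]
          rw [hr]
          simp only [Fin.val_zero]
          constructor
          · intro h
            have h1 : e' ⟨a, ha⟩ = e' ⟨w₀, hw₀v⟩ := Fin.ext (by omega)
            exact congrArg Subtype.val (e'.injective h1)
          · intro ha2
            right
            have h5 : (⟨a, ha⟩ : ↥s) = ⟨w₀, hw₀v⟩ := Subtype.ext ha2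
            rw [h5, he'0]
        · rw [hval a ha, hval b hb]
          have hH : H.Adj a b ↔ H'.Adj ⟨a, ha⟩ ⟨b, hb⟩ := Iff.rfl
          rw [hH, ← e'.map_rel_iff, pathGraph_adj]
          omega
      refine ⟨⟨⟨f, g, hlinv, hrinv⟩, key _ _⟩, by show (f v).val = 0; rw [hfv]; simp, ?_⟩
      intro w hw
      by_cases hwv : w = v
      · exact Or.inl hwv
      · right
        show (f w).val + 1 = m + 1
        have hwdeg : (H'.neighborSet ⟨w, hwv⟩).ncard ≤ 1 := by
          rw [hH', ncard_neighborSet_induce]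
          exact le_trans (Set.ncard_le_ncard Set.inter_subset_left (Set.toFinite _)) hw
        rcases he'last ⟨w, hwv⟩ hwdeg with heq | hlast
        · have hww₀ : w = w₀ := congrArg Subtype.val heq
          by_cases hm2 : m = 1
          · rw [hval w hwv]
            have h3 : (e' ⟨w, hwv⟩).val = 0 := by rw [heq]; exact he'0
            omega
          · exfalso
            have hnbrw : H.neighborSet w = {v} :=
              Set.eq_singleton_iff_unique_mem.mpr ⟨by rw [hww₀]; exact hvw₀.symm,
                fun x hx => (Set.ncard_le_one (Set.toFinite _)).mp hw x hx v
                  (by rw [hww₀]; exact hvw₀.symm)⟩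
            obtain ⟨z, hz⟩ := exists_adj_of_two_le_card H' hconn' (by omega) ⟨w, hwv⟩
            have h4 : z.val ∈ H.neighborSet w := hz
            rw [hnbrw] at h4
            exact z.prop h4
        · rw [hval w hwv]
          omega

end PathIso

section CycleIso

theorem cycle_iso {W : Type} [Fintype W] [DecidableEq W] (H : SimpleGraph W)
    (hconn : H.Connected) (hdeg : ∀ w : W, (H.neighborSet w).ncard = 2) :
    3 ≤ Fintype.card W ∧ Nonempty (H ≃g cycleGraph (Fintype.card W)) := by
  classical
  obtain ⟨v⟩ := hconn.nonempty
  obtain ⟨a, b, hab, hnv⟩ := Set.ncard_eq_two.mp (hdeg v)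
  have hva : H.Adj v a := by rw [← SimpleGraph.mem_neighborSet, hnv]; simp
  have hvb : H.Adj v b := by rw [← SimpleGraph.mem_neighborSet, hnv]; simp
  have hav : a ≠ v := hva.ne'
  have hbv : b ≠ v := hvb.ne'
  have hn3 : 3 ≤ Fintype.card W := by
    have h := Fintype.two_lt_card_iff.mpr ⟨v, a, b, hva.ne, hvb.ne, hab⟩
    omega
  set n := Fintype.card W with hn
  set Hm : SimpleGraph W := H.deleteEdges {s(v, a)} with hHm
  have hminus : ∀ x y : W, Hm.Adj x y ↔ H.Adj x y ∧ ¬ s(x, y) = s(v, a) := by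
    intro x y; rw [hHm, SimpleGraph.deleteEdges_adj]; simp
  have hnbv : Hm.neighborSet v = H.neighborSet v \ {a} := by
    ext y
    simp only [SimpleGraph.mem_neighborSet, Set.mem_diff, Set.mem_singleton_iff, hminus]
    rw [Sym2.congr_right]
  have hnba : Hm.neighborSet a = H.neighborSet a \ {v} := by
    ext y
    simp only [SimpleGraph.mem_neighborSet, Set.mem_diff, Set.mem_singleton_iff, hminus]
    rw [show s(v, a) = s(a, v) from Sym2.eq_swap, Sym2.congr_right]
  have hnbx : ∀ x : W, x ≠ v → x ≠ a → Hm.neighborSet x = H.neighborSet x := by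
    intro x hxv hxa
    ext y
    simp only [SimpleGraph.mem_neighborSet, hminus, and_iff_left_iff_imp]
    intro _ heq
    rcases Sym2.eq_iff.mp heq with ⟨h1, _⟩ | ⟨h1, _⟩
    · exact hxv h1
    · exact hxa h1
  have hcardnv : (Hm.neighborSet v).ncard = 1 := by
    rw [hnbv, Set.ncard_diff_singleton_of_mem (show a ∈ H.neighborSet v from hva)
      , hdeg v]
  have hcardna : (Hm.neighborSet a).ncard = 1 := by
    rw [hnba, Set.ncard_diff_singleton_of_mem (show v ∈ H.neighborSet a from hva.symm)
      , hdeg a]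
  have hdegm : ∀ x : W, (Hm.neighborSet x).ncard ≤ 2 := by
    intro x
    refine le_trans (Set.ncard_le_ncard ?_ (Set.toFinite _)) (le_of_eq (hdeg x))
    intro y hy
    exact ((hminus x y).mp hy).1
  -- connectivity of Hm
  have hconnm : Hm.Connected := by
    set K : Set W := (Hm.connectedComponentMk v).supp with hK
    have hvK : v ∈ K := by rw [hK, ConnectedComponent.mem_supp_iff]
    have hclK : ∀ x y : W, x ∈ K → Hm.Adj x y → y ∈ K :=
      fun x y hx hxy => supp_closed Hm _ hx hxy
    have haK : a ∈ K := by
      by_contra haK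
      set Hk : SimpleGraph ↥K := Hm.induce K with hHk
      have hdegK : ∀ x : ↥K, Hk.degree x = (Hm.neighborSet x.val).ncard := by
        intro x
        have hxsub : Hm.neighborSet x.val ∩ K = Hm.neighborSet x.val :=
          Set.inter_eq_left.mpr (fun y hy => hclK _ _ x.prop hy)
        rw [degree_eq_ncard, hHk, ncard_neighborSet_induce, hxsub]
      have hfilter : Finset.univ.filter (fun x : ↥K => Odd (Hk.degree x)) = {⟨v, hvK⟩} := by
        ext x
        simp only [Finset.mem_filter, Finset.mem_univ, true_and, Finset.mem_singleton]
        constructor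
        · intro hodd
          by_contra hne
          have hxv : x.val ≠ v := fun h => hne (Subtype.ext h)
          have hxa : x.val ≠ a := fun h => haK (h ▸ x.prop)
          rw [hdegK, hnbx x.val hxv hxa, hdeg] at hodd
          exact (Nat.not_odd_iff_even.mpr (by decide)) hodd
        · rintro rfl
          rw [hdegK]
          simp only [hcardnv]
          decide
      have heven := Hk.even_card_odd_degree_vertices
      rw [hfilter] at heven
      simp at heven
    -- K is closed under H-adjacency
    have hclH : ∀ x y : W, x ∈ K → H.Adj x y → y ∈ K := by
      intro x y hx hxy
      by_cases heq : s(x, y) = s(v, a)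
      · rcases Sym2.eq_iff.mp heq with ⟨rfl, rfl⟩ | ⟨rfl, rfl⟩
        · exact haK
        · exact hvK
      · exact hclK x y hx ((hminus x y).mpr ⟨hxy, heq⟩)
    have hKuniv : ∀ x : W, x ∈ K := by
      intro x
      obtain ⟨p⟩ := hconn.preconnected v x
      exact walk_closed H K hclH p hvK
    have hne : Nonempty W := ⟨v⟩
    refine ⟨fun x y => ?_⟩
    have hx := hKuniv x
    have hy := hKuniv y
    rw [hK, ConnectedComponent.mem_supp_iff] at hx hy
    exact ConnectedComponent.exact (hx.trans hy.symm)
  obtain ⟨e, he0, helast⟩ := path_iso n W Hm hn.symm hconnm hdegm v (le_of_eq hcardnv)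
  have hea : (e a).val + 1 = n := by
    rcases helast a (le_of_eq hcardna) with h | h
    · exact absurd h hav
    · exact h
  have hvA : ∀ x : W, x = v ↔ (e x).val = 0 := by
    intro x
    constructor
    · rintro rfl; exact he0
    · intro h
      have : e x = e v := Fin.ext (by rw [h, he0])
      exact e.injective this
  have haA : ∀ x : W, x = a ↔ (e x).val = n - 1 := by
    intro x
    constructor
    · rintro rfl; omega
    · intro h
      have : e x = e a := Fin.ext (by omega)
      exact e.injective this
  have hHadj : ∀ x y : W, H.Adj x y ↔ (Hm.Adj x y ∨ ((x = v ∧ y = a) ∨ (x = a ∧ y = v))) := by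
    intro x y
    constructor
    · intro h
      by_cases heq : s(x, y) = s(v, a)
      · rcases Sym2.eq_iff.mp heq with ⟨h1, h2⟩ | ⟨h1, h2⟩
        · exact Or.inr (Or.inl ⟨h1, h2⟩)
        · exact Or.inr (Or.inr ⟨h1, h2⟩)
      · exact Or.inl ((hminus x y).mpr ⟨h, heq⟩)
    · rintro (h | ⟨rfl, rfl⟩ | ⟨rfl, rfl⟩)
      · exact ((hminus x y).mp h).1
      · exact hva
      · exact hva.symm
  refine ⟨hn3, ⟨⟨e.toEquiv, ?_⟩⟩⟩
  intro x y
  show (cycleGraph n).Adj (e x) (e y) ↔ H.Adj x y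
  rw [cycleGraph_adj_iff hn3, hHadj x y]
  have hm : Hm.Adj x y ↔ ((e x).val + 1 = (e y).val ∨ (e y).val + 1 = (e x).val) := by
    rw [← pathGraph_adj, e.map_rel_iff]
  rw [hm, ← hvA x, ← hvA y, ← haA x, ← haA y]
  tauto

end CycleIso

section Main

lemma side_lemma {V : Type} (G : SimpleGraph V) (A B : Set V) (hA : Indep G A)
    (x y : V) (hx : x ∈ A ∧ x ∉ B) (hy : y ∈ symmDiff A B)
    (hadj : G.Adj x y) : y ∈ B ∧ y ∉ A := by
  rcases Set.mem_symmDiff.mp hy with ⟨hyA, hyB⟩ | ⟨hyB, hyA⟩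
  · exact absurd hadj (hA x hx.1 y hyA)
  · exact ⟨hyB, hyA⟩

theorem main_aux {V : Type} (G : SimpleGraph V)
    (hcf : ClawFree G) (I J : Set V) (hI : Indep G I) (hJ : Indep G J)
    (W : Type) [Fintype W] [DecidableEq W] (Hc : SimpleGraph W)
    (hconn : Hc.Connected) (f : W → V) (hinj : Function.Injective f)
    (hfS : ∀ w : W, f w ∈ symmDiff I J)
    (hfadj : ∀ x y : W, Hc.Adj x y → G.Adj (f x) (f y)) :
    (∃ m : ℕ, 1 ≤ m ∧ Nonempty (Hc ≃g pathGraph m)) ∨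
    (∃ t : ℕ, 2 ≤ t ∧ Nonempty (Hc ≃g cycleGraph (2*t))) := by
  classical
  have hdeg : ∀ w : W, (Hc.neighborSet w).ncard ≤ 2 := by
    intro w
    by_contra hgt
    have hgt2 : 2 < (Hc.neighborSet w).ncard := by omega
    obtain ⟨y1, hy1, y2, hy2, y3, hy3, h12, h13, h23⟩ :=
      (Set.two_lt_ncard (Set.toFinite _)).mp hgt2
    have ha1 : G.Adj (f w) (f y1) := hfadj w y1 hy1
    have ha2 : G.Adj (f w) (f y2) := hfadj w y2 hy2
    have ha3 : G.Adj (f w) (f y3) := hfadj w y3 hy3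
    have hd12 : f y1 ≠ f y2 := fun h => h12 (hinj h)
    have hd13 : f y1 ≠ f y3 := fun h => h13 (hinj h)
    have hd23 : f y2 ≠ f y3 := fun h => h23 (hinj h)
    rcases Set.mem_symmDiff.mp (hfS w) with hw | hw
    · have h1 := side_lemma G I J hI _ _ hw (hfS y1) ha1
      have h2 := side_lemma G I J hI _ _ hw (hfS y2) ha2
      have h3 := side_lemma G I J hI _ _ hw (hfS y3) ha3
      exact hcf ⟨f w, f y1, f y2, f y3, ha1, ha2, ha3,
        hd12, hd13, hd23, hJ _ h1.1 _ h2.1, hJ _ h1.1 _ h3.1, hJ _ h2.1 _ h3.1⟩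
    · have hfS' : ∀ y : W, f y ∈ symmDiff J I := by
        intro y; rw [symmDiff_comm]; exact hfS y
      have h1 := side_lemma G J I hJ _ _ hw (hfS' y1) ha1
      have h2 := side_lemma G J I hJ _ _ hw (hfS' y2) ha2
      have h3 := side_lemma G J I hJ _ _ hw (hfS' y3) ha3
      exact hcf ⟨f w, f y1, f y2, f y3, ha1, ha2, ha3,
        hd12, hd13, hd23, hI _ h1.1 _ h2.1, hI _ h1.1 _ h3.1, hI _ h2.1 _ h3.1⟩
  by_cases hex : ∃ w : W, (Hc.neighborSet w).ncard ≤ 1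
  · obtain ⟨w, hw⟩ := hex
    have : Nonempty W := ⟨w⟩
    obtain ⟨e, -, -⟩ := path_iso (Fintype.card W) W Hc rfl hconn hdeg w hw
    exact Or.inl ⟨Fintype.card W, Fintype.card_pos, ⟨e⟩⟩
  · push_neg at hex
    have hdeg2 : ∀ w : W, (Hc.neighborSet w).ncard = 2 := by
      intro w
      have h1 := hdeg w
      have h2 := hex w
      omega
    obtain ⟨hn3, ⟨e⟩⟩ := cycle_iso Hc hconn hdeg2
    have hd : ∀ i j, (cycleGraph (Fintype.card W)).Adj i j →
        (decide (f (e.symm i) ∈ I)) ≠ (decide (f (e.symm j) ∈ I)) := by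
      intro i j hadj hdec
      have hiff : (f (e.symm i) ∈ I) ↔ (f (e.symm j) ∈ I) := by
        rwa [decide_eq_decide] at hdec
      have hadj' : Hc.Adj (e.symm i) (e.symm j) := by
        rw [← e.map_rel_iff]
        simpa using hadj
      have hG : G.Adj (f (e.symm i)) (f (e.symm j)) := hfadj _ _ hadj'
      by_cases hmem : f (e.symm i) ∈ I
      · exact hI _ hmem _ (hiff.mp hmem) hG
      · have hJi : f (e.symm i) ∈ J := by
          rcases Set.mem_symmDiff.mp (hfS (e.symm i)) with h | h
          · exact absurd h.1 hmem
          · exact h.1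
        have hJj : f (e.symm j) ∈ J := by
          rcases Set.mem_symmDiff.mp (hfS (e.symm j)) with h | h
          · exact absurd h.1 (fun hh => hmem (hiff.mpr hh))
          · exact h.1
        exact hJ _ hJi _ hJj hG
    have heven : Even (Fintype.card W) := even_of_cycle_coloring hn3 _ hd
    obtain ⟨t, ht⟩ := heven
    refine Or.inr ⟨t, by omega, ?_⟩
    rw [show 2 * t = Fintype.card W by omega]
    exact ⟨e⟩


/-- Every connected component of `G[I △ J]` is a path or an even cycle. -/
theorem stmt_0 {V : Type} [Fintype V] [DecidableEq V] (G : SimpleGraph V)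
    (hcf : ClawFree G) (I J : Set V) (hI : Indep G I) (hJ : Indep G J)
    (comp : (G.induce (symmDiff I J)).ConnectedComponent) :
    (∃ m : ℕ, 1 ≤ m ∧
      Nonempty (((G.induce (symmDiff I J)).induce comp.supp) ≃g pathGraph m)) ∨
    (∃ t : ℕ, 2 ≤ t ∧
      Nonempty (((G.induce (symmDiff I J)).induce comp.supp) ≃g cycleGraph (2*t))) := by
  classical
  exact main_aux G hcf I J hI hJ ↥comp.supp _
    (induce_supp_connected (G.induce (symmDiff I J)) comp)
    (fun w => w.val.val) (fun x y h => Subtype.ext (Subtype.ext h))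
    (fun w => w.val.prop) (fun x y h => h)
end Main
end

section
/- Let G be a connected claw-free graph and let I and J be independent sets in G with |I| = |J|. If the induced subgraph G[I △ J] contains no cycles, then there is a TS-sequence from I to J, i.e., I and J are connected in the token sliding graph TS_k(G) where k = |I|. -/
open SimpleGraph

lemma tsstep_symm {V : Type} {G : SimpleGraph V} {I J : Set V} (h : TSStep G I J) : TSStep G J I := by
  obtain ⟨hI, hJ, u, v, huv, h1, h2⟩ := h
  exact ⟨hJ, hI, v, u, huv.symm, h2, h1⟩

lemma tsreach_symm {V : Type} {G : SimpleGraph V} {I J : Set V} (h : TSReach G I J) : TSReach G J I :=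
  by
    induction h with
    | refl => exact Relation.ReflTransGen.refl
    | tail _ hs ih => exact (Relation.ReflTransGen.single (tsstep_symm hs)).trans ih

-- walk prefix/suffix bounds
lemma exists_walk_prefix {V : Type} {G : SimpleGraph V} :
    ∀ {u v : V} (p : G.Walk u v) (i : ℕ), ∃ q : G.Walk u (p.getVert i), q.length ≤ i := by
  intro u v p
  induction p with
  | nil => intro i; exact ⟨Walk.nil, by simp⟩
  | cons h q ih =>
    intro i
    cases i with
    | zero => exact ⟨Walk.nil, Nat.le_of_eq rfl⟩
    | succ n =>
      obtain ⟨q', hq'⟩ := ih n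
      exact ⟨Walk.cons h q', by simpa using Nat.succ_le_succ hq'⟩

lemma exists_walk_suffix {V : Type} {G : SimpleGraph V} :
    ∀ {u v : V} (p : G.Walk u v) (i : ℕ), ∃ q : G.Walk (p.getVert i) v, q.length ≤ p.length - i := by
  intro u v p
  induction p with
  | nil => intro i; exact ⟨Walk.nil, by simp⟩
  | cons h q ih =>
    intro i
    cases i with
    | zero => exact ⟨Walk.cons h q, Nat.le_of_eq (Nat.sub_zero _).symm⟩
    | succ n =>
      obtain ⟨q', hq'⟩ := ih n
      exact ⟨q', by simpa using hq'.trans (by omega)⟩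

/-- A shortest path presented as an indexed chordless sequence. -/
lemma shortest_path_seq {V : Type} {G : SimpleGraph V} (hconn : G.Connected) (u v : V) :
    ∃ (m : ℕ) (x : ℕ → V), x 0 = u ∧ x m = v ∧
      (∀ i, i < m → G.Adj (x i) (x (i+1))) ∧
      (∀ i j, j ≤ m → i + 1 < j → ¬ G.Adj (x i) (x j)) ∧
      (∀ i j, i ≤ m → j ≤ m → x i = x j → i = j) := by
  obtain ⟨p, hp⟩ := hconn.exists_walk_length_eq_dist u v
  set m := p.length with hm
  refine ⟨m, fun i => p.getVert i, p.getVert_zero, by simp [hm, Walk.getVert_length], ?_, ?_, ?_⟩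
  · intro i hi; exact p.adj_getVert_succ hi
  · intro i j hj hij hadj
    obtain ⟨q1, hq1⟩ := exists_walk_prefix p i
    obtain ⟨q2, hq2⟩ := exists_walk_suffix p j
    have h1 : G.dist u (p.getVert i) ≤ i := le_trans (dist_le q1) hq1
    have h2 : G.dist (p.getVert j) v ≤ m - j := le_trans (dist_le q2) hq2
    have h3 : G.dist (p.getVert i) (p.getVert j) ≤ 1 := dist_le (Walk.cons hadj Walk.nil)
    have t1 := hconn.dist_triangle (u := u) (v := p.getVert i) (w := v)
    have t2 := hconn.dist_triangle (u := p.getVert i) (v := p.getVert j) (w := v)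
    have : G.dist u v ≤ i + (1 + (m - j)) := by
      calc G.dist u v ≤ G.dist u (p.getVert i) + G.dist (p.getVert i) v := t1
      _ ≤ i + (G.dist (p.getVert i) (p.getVert j) + G.dist (p.getVert j) v) :=
          Nat.add_le_add h1 t2
      _ ≤ i + (1 + (m - j)) := by exact Nat.add_le_add le_rfl (Nat.add_le_add h3 h2)
    rw [← hp] at this
    omega
  · intro i j hi hj hij
    have hij' : p.getVert i = p.getVert j := hij
    by_contra hne
    rcases Nat.lt_or_ge i j with hlt | hge
    · obtain ⟨q1, hq1⟩ := exists_walk_prefix p i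
      obtain ⟨q2, hq2⟩ := exists_walk_suffix p j
      have h1 : G.dist u (p.getVert i) ≤ i := le_trans (dist_le q1) hq1
      have h2 : G.dist (p.getVert j) v ≤ m - j := le_trans (dist_le q2) hq2
      have t1 := hconn.dist_triangle (u := u) (v := p.getVert i) (w := v)
      rw [← hij'] at h2
      have : G.dist u v ≤ i + (m - j) := le_trans t1 (Nat.add_le_add h1 h2)
      rw [← hp] at this
      omega
    · have hlt : j < i := by omega
      obtain ⟨q1, hq1⟩ := exists_walk_prefix p j
      obtain ⟨q2, hq2⟩ := exists_walk_suffix p i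
      have h1 : G.dist u (p.getVert j) ≤ j := le_trans (dist_le q1) hq1
      have h2 : G.dist (p.getVert i) v ≤ m - i := le_trans (dist_le q2) hq2
      have t1 := hconn.dist_triangle (u := u) (v := p.getVert j) (w := v)
      rw [hij'] at h2
      have : G.dist u v ≤ j + (m - i) := le_trans t1 (Nat.add_le_add h1 h2)
      rw [← hp] at this
      omega

/-- An edge of a path incident to the starting vertex is the first edge. -/
lemma edge_from_start {W : Type} {H : SimpleGraph W} :
    ∀ {v u w : W} (r : H.Walk v u), r.IsPath → s(v, w) ∈ r.edges → w = r.getVert 1 := by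
  intro v u w r
  cases r with
  | nil => intro _ h; simp at h
  | @cons _ b _ h r' =>
    intro hp he
    have hvr : v ∉ r'.support := ((Walk.cons_isPath_iff h r').mp hp).2
    rw [Walk.edges_cons, List.mem_cons] at he
    rcases he with he | he
    · rw [Sym2.eq_iff] at he
      rcases he with ⟨-, rfl⟩ | ⟨hvb, rfl⟩
      · rw [show (1:ℕ) = 0 + 1 from rfl, Walk.getVert_cons_succ, Walk.getVert_zero]
      · exact absurd (hvb ▸ h) (H.irrefl)
    · exact absurd (Walk.fst_mem_support_of_mem_edges r' (by rwa [Sym2.eq_swap] at he)) hvr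

open Classical in
/-- A finite nonempty acyclic graph cannot have all degrees ≥ 2. -/
lemma no_mindeg_two {W : Type} [Fintype W] (H : SimpleGraph W) (hne : Nonempty W)
    (h2 : ∀ v : W, ∃ a b : W, a ≠ b ∧ H.Adj v a ∧ H.Adj v b)
    (hac : H.IsAcyclic) : False := by
  classical
  obtain ⟨w0⟩ := hne
  set P : ℕ → Prop := fun n => ∃ (u v : W) (p : H.Walk u v), p.IsPath ∧ p.length = n with hP
  have hP0 : P 0 := ⟨w0, w0, Walk.nil, Walk.IsPath.nil, rfl⟩
  have hbound : ∀ n, P n → n < Fintype.card W := by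
    rintro n ⟨u, v, p, hp, rfl⟩
    exact hp.length_lt
  set N := Nat.findGreatest P (Fintype.card W) with hN
  have hPN : P N := Nat.findGreatest_spec (Nat.zero_le _) hP0
  have hmax : ∀ M, P M → M ≤ N := by
    intro M hM
    by_contra hlt
    exact Nat.findGreatest_is_greatest (by omega) (le_of_lt (hbound M hM)) hM
  obtain ⟨u, v, p, hp, hplen⟩ := hPN
  -- work with the reverse path starting at v
  set r := p.reverse with hr
  have hrp : r.IsPath := hp.reverse
  have hrlen : r.length = N := by rw [hr, Walk.length_reverse, hplen]
  obtain ⟨a, b, hab, hva, hvb⟩ := h2 v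
  set s := r.getVert 1 with hs
  set w := if a = s then b else a with hw
  have hvw : H.Adj v w := by
    by_cases h : a = s <;> simp [hw, h, hva, hvb]
  have hws : w ≠ s := by
    by_cases h : a = s
    · simp only [hw, if_pos h]
      intro hbs
      exact hab (h.trans hbs.symm)
    · simp [hw, if_neg h, h]
  by_cases hsup : w ∈ r.support
  · -- two distinct paths from v to w : contradiction
    have hq : (r.takeUntil w hsup).IsPath := hrp.takeUntil hsup
    have hone : (Walk.cons hvw (Walk.nil : H.Walk w w)).IsPath := by
      rw [Walk.cons_isPath_iff]
      exact ⟨Walk.IsPath.nil, by simp [hvw.ne]⟩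
    have := hac.path_unique ⟨r.takeUntil w hsup, hq⟩ ⟨Walk.cons hvw Walk.nil, hone⟩
    have heq : r.takeUntil w hsup = Walk.cons hvw Walk.nil := congrArg Subtype.val this
    have hedge : s(v, w) ∈ (r.takeUntil w hsup).edges := by
      rw [heq]; simp
    have : s(v, w) ∈ r.edges := Walk.edges_takeUntil_subset r hsup hedge
    exact hws (edge_from_start r hrp this)
  · -- extend the path: contradicts maximality
    have hext : (Walk.cons hvw.symm r).IsPath := by
      rw [Walk.cons_isPath_iff]; exact ⟨hrp, hsup⟩
    have : P (N + 1) := ⟨w, u, Walk.cons hvw.symm r, hext, by simp [hrlen]⟩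
    have := hmax _ this
    omega

lemma tsstep_slide {V : Type} {G : SimpleGraph V} {I : Set V} {a b : V}
    (hI : Indep G I) (ha : a ∈ I) (hb : b ∉ I) (hadj : G.Adj a b)
    (hbfree : ∀ t ∈ I, t ≠ a → ¬G.Adj b t) :
    TSStep G I (I \ {a} ∪ {b}) := by
  have hab : a ≠ b := hadj.ne
  refine ⟨hI, ?_, a, b, hadj, ?_, ?_⟩
  · intro u hu v hv huv
    rcases hu with ⟨huI, hua⟩ | rfl
    · rcases hv with ⟨hvI, hva⟩ | rfl
      · exact hI u huI v hvI huv
      · exact hbfree u huI hua huv.symm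
    · rcases hv with ⟨hvI, hva⟩ | rfl
      · exact hbfree v hvI hva huv
      · exact G.irrefl huv
  · ext u
    simp only [Set.mem_diff, Set.mem_union, Set.mem_singleton_iff]
    constructor
    · rintro ⟨huI, hnot⟩
      by_contra hua
      exact hnot (Or.inl ⟨huI, hua⟩)
    · rintro rfl
      refine ⟨ha, ?_⟩
      rintro (⟨-, h⟩ | rfl)
      · exact h rfl
      · exact hb ha
  · ext u
    simp only [Set.mem_diff, Set.mem_union, Set.mem_singleton_iff]
    constructor
    · rintro ⟨⟨huI, -⟩ | rfl, hnI⟩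
      · exact absurd huI hnI
      · rfl
    · rintro rfl
      exact ⟨Or.inr rfl, hb⟩

/-- Routing lemma: a token at the far end of an induced path whose start is a totally
free vertex can be routed to the start. -/
lemma route {V : Type} {G : SimpleGraph V} (hcf : ClawFree G) :
    ∀ m : ℕ, ∀ (x : ℕ → V) (I : Set V), Indep G I →
      (∀ i, i < m → G.Adj (x i) (x (i+1))) →
      (∀ i j, j ≤ m → i + 1 < j → ¬ G.Adj (x i) (x j)) →
      (∀ i j, i ≤ m → j ≤ m → x i = x j → i = j) →
      x m ∈ I → x 0 ∉ I → (∀ t ∈ I, ¬ G.Adj (x 0) t) →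
      TSReach G I (I \ {x m} ∪ {x 0}) := by
  intro m
  induction m using Nat.strong_induction_on with
  | _ m IH =>
  intro x I hInd hadj hchord hinj hxm hx0 hfree
  classical
  match m, hxm, hadj, hchord, hinj, IH with
  | 0, hxm, _, _, _, _ => exact absurd hxm hx0
  | 1, hxm, hadj, _, _, _ => exact absurd (hadj 0 Nat.zero_lt_one) (hfree (x 1) hxm)
  | (n+2), hxm, hadj, hchord, hinj, IH =>
  set m := n + 2 with hmdef
  have hm2 : 2 ≤ m := by omega
  -- least index ≥ 1 whose vertex has a token neighbor
  have hR : ∃ i, 1 ≤ i ∧ ∃ t ∈ I, G.Adj (x i) t := by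
    refine ⟨m - 1, by omega, x m, hxm, ?_⟩
    have := hadj (m - 1) (by omega)
    rwa [show m - 1 + 1 = m by omega] at this
  set j := Nat.find hR with hjdef
  obtain ⟨hj1, t, htI, hadjt⟩ := Nat.find_spec hR
  have hjle : j ≤ m - 1 := Nat.find_min' hR ⟨by omega, x m, hxm, by
    have := hadj (m - 1) (by omega)
    rwa [show m - 1 + 1 = m by omega] at this⟩
  have P0 : ∀ i, i < j → ∀ s ∈ I, ¬ G.Adj (x i) s := by
    intro i hi s hs hadjs
    rcases Nat.eq_zero_or_pos i with rfl | hi1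
    · exact hfree s hs hadjs
    · exact Nat.find_min hR hi ⟨hi1, s, hs, hadjs⟩
  have hxnotI : ∀ i, i ≤ j → x i ∉ I := by
    intro i hi hmem
    rcases Nat.eq_zero_or_pos i with rfl | hi1
    · exact hx0 hmem
    · have h1 := hadj (i - 1) (by omega)
      rw [show i - 1 + 1 = i by omega] at h1
      exact P0 (i - 1) (by omega) (x i) hmem h1
  have huniq : ∀ s ∈ I, G.Adj (x j) s → s = t := by
    intro s hs hadjs
    by_contra hst
    refine hcf ⟨x j, s, t, x (j - 1), hadjs, hadjt, ?_, hst, ?_, ?_, ?_, ?_, ?_⟩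
    · have h1 := hadj (j - 1) (by omega)
      rw [show j - 1 + 1 = j by omega] at h1
      exact h1.symm
    · exact fun h => hxnotI (j-1) (by omega) (h ▸ hs)
    · exact fun h => hxnotI (j-1) (by omega) (h ▸ htI)
    · exact hInd s hs t htI
    · exact fun h => P0 (j-1) (by omega) s hs h.symm
    · exact fun h => P0 (j-1) (by omega) t htI h.symm
  have hindep_s : ∀ s, s ≤ j → Indep G (I \ {t} ∪ {x s}) := by
    intro s hsj u hu v hv huv
    rcases hu with ⟨huI, hut⟩ | rfl
    · rcases hv with ⟨hvI, hvt⟩ | rfl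
      · exact hInd u huI v hvI huv
      · rcases Nat.lt_or_ge s j with h | h
        · exact P0 s h u huI huv.symm
        · have : s = j := by omega
          exact hut (huniq u huI (this ▸ huv.symm))
    · rcases hv with ⟨hvI, hvt⟩ | rfl
      · rcases Nat.lt_or_ge s j with h | h
        · exact P0 s h v hvI huv
        · have : s = j := by omega
          exact hvt (huniq v hvI (this ▸ huv))
      · exact G.irrefl huv
  -- the cascade: token t slides to x j then down to x 0
  have cascade : ∀ s, s ≤ j → TSReach G I (I \ {t} ∪ {x (j - s)}) := by
    intro s
    induction s with
    | zero =>
      intro _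
      rw [Nat.sub_zero]
      refine Relation.ReflTransGen.single (tsstep_slide hInd htI (hxnotI j le_rfl) hadjt.symm ?_)
      intro u huI hut hadju
      exact hut (huniq u huI hadju)
    | succ s ihs =>
      intro hs1
      have prev := ihs (by omega)
      have hjs1 : j - s ≥ 1 := by omega
      have hadjstep : G.Adj (x (j - s)) (x (j - s - 1)) := by
        have h1 := hadj (j - s - 1) (by omega)
        rw [show j - s - 1 + 1 = j - s by omega] at h1
        exact h1.symm
      have hmem : x (j - s) ∈ I \ {t} ∪ {x (j - s)} := Or.inr rfl
      have hnot : x (j - s - 1) ∉ I \ {t} ∪ {x (j - s)} := by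
        rintro (⟨hmem', -⟩ | heq)
        · exact hxnotI (j - s - 1) (by omega) hmem'
        · have := hinj (j - s - 1) (j - s) (by omega) (by omega) heq
          omega
      have hfree2 : ∀ u ∈ I \ {t} ∪ {x (j - s)}, u ≠ x (j - s) → ¬G.Adj (x (j - s - 1)) u := by
        rintro u (⟨huI, -⟩ | rfl) hne hadju
        · exact P0 (j - s - 1) (by omega) u huI hadju
        · exact hne rfl
      have hstep := tsstep_slide (a := x (j - s)) (b := x (j - s - 1))
        (hindep_s (j - s) (by omega)) hmem hnot hadjstep hfree2
      have hseteq : (I \ {t} ∪ {x (j - s)}) \ {x (j - s)} ∪ {x (j - s - 1)}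
          = I \ {t} ∪ {x (j - (s+1))} := by
        rw [show j - (s+1) = j - s - 1 by omega]
        ext u
        simp only [Set.mem_union, Set.mem_diff, Set.mem_singleton_iff]
        constructor
        · rintro (⟨(⟨huI, hut⟩ | rfl), hne⟩ | rfl)
          · exact Or.inl ⟨huI, hut⟩
          · exact absurd rfl hne
          · exact Or.inr rfl
        · rintro (⟨huI, hut⟩ | rfl)
          · exact Or.inl ⟨Or.inl ⟨huI, hut⟩, fun h => hxnotI (j - s) (by omega) (h ▸ huI)⟩
          · exact Or.inr rfl
      rw [hseteq] at hstep
      exact prev.tail hstep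
  have hreach1 : TSReach G I (I \ {t} ∪ {x 0}) := by
    have h := cascade j le_rfl
    rwa [Nat.sub_self] at h
  by_cases htm : t = x m
  · rwa [htm] at hreach1
  -- t ≠ x m : find the farthest attachment of t on the path and recurse
  · set istar := Nat.findGreatest (fun i => G.Adj (x i) t) m with histar
    have hPj : G.Adj (x j) t := hadjt
    have histar_ge : j ≤ istar := Nat.le_findGreatest (by omega) hPj
    have histar_le : istar ≤ m := Nat.findGreatest_le m
    have hstar : G.Adj (x istar) t := by
      have := Nat.findGreatest_spec (P := fun i => G.Adj (x i) t) (by omega : j ≤ m) hPj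
      rwa [← histar] at this
    have hmaxattach : ∀ i, istar < i → i ≤ m → ¬ G.Adj (x i) t := by
      intro i hi him
      exact Nat.findGreatest_is_greatest hi him
    have histar_lt : istar < m := by
      rcases Nat.lt_or_ge istar m with h | h
      · exact h
      · have : istar = m := by omega
        rw [this] at hstar
        exact absurd hstar (hInd (x m) hxm t htI)
    -- t is not a vertex of the suffix path
    have hts : ∀ i, istar ≤ i → i ≤ m → t ≠ x i := by
      intro i hi him heq
      rcases Nat.lt_or_ge i (istar + 1) with h | h
      · have : i = istar := by omega
        rw [this] at heq
        exact G.irrefl (heq ▸ hstar)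
      · rcases Nat.lt_or_ge i (istar + 2) with h2 | h2
        · have hieq : i = istar + 1 := by omega
          rcases Nat.lt_or_ge i m with him' | him'
          · have hnext := hadj i him'
            rw [← heq] at hnext
            exact hmaxattach (i+1) (by omega) (by omega) hnext.symm
          · have : i = m := by omega
            exact htm (heq.trans (congrArg x this))
        · have hchord' := hchord istar i him (by omega)
          rw [← heq] at hchord'
          exact hchord' hstar
    -- the claw argument : istar ≥ j + 1
    have histar_gt : j + 1 ≤ istar := by
      by_contra hlt
      have hieq : istar = j := by omega
      have hjm : j + 1 ≤ m := by omega
      have hnadj : ¬ G.Adj (x (j+1)) t := by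
        intro h
        exact hmaxattach (j+1) (by omega) hjm h
      have htne : t ≠ x (j+1) := by
        intro heq
        rcases Nat.lt_or_ge (j+1) m with h | h
        · have hnext := hadj (j+1) h
          rw [← heq] at hnext
          exact hmaxattach (j+2) (by omega) (by omega) hnext.symm
        · have : j + 1 = m := by omega
          exact htm (heq.trans (congrArg x this))
      refine hcf ⟨x j, x (j-1), x (j+1), t, ?_, ?_, hadjt, ?_, ?_, ?_, ?_, ?_, ?_⟩
      · have h1 := hadj (j - 1) (by omega)
        rw [show j - 1 + 1 = j by omega] at h1
        exact h1.symm
      · exact hadj j (by omega)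
      · intro heq
        have := hinj (j-1) (j+1) (by omega) (by omega) heq
        omega
      · exact fun h => hxnotI (j-1) (by omega) (h ▸ htI)
      · exact fun h => htne h.symm
      · exact hchord (j-1) (j+1) (by omega) (by omega)
      · exact fun h => P0 (j-1) (by omega) t htI h
      · exact fun h => hnadj h
    -- set up the recursive call
    set I1 := I \ {t} ∪ {x 0} with hI1def
    have hI1 : Indep G I1 := by
      rintro u (⟨huI, -⟩ | rfl) v (⟨hvI, -⟩ | rfl) huv
      · exact hInd u huI v hvI huv
      · exact hfree u huI huv.symm
      · exact hfree v hvI huv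
      · exact G.irrefl huv
    set m' := m - istar + 1 with hm'def
    have hm'lt : m' < m := by omega
    set y : ℕ → V := fun s => if s = 0 then t else x (istar + s - 1) with hydef
    have hy0 : y 0 = t := rfl
    have hys : ∀ s, 1 ≤ s → y s = x (istar + s - 1) := by
      intro s hs
      have : s ≠ 0 := by omega
      simp [hydef, this]
    have hym : y m' = x m := by
      rw [hys m' (by omega)]
      congr 1
      omega
    have hrec := IH m' hm'lt y I1 hI1 ?_ ?_ ?_ ?_ ?_ ?_
    · -- combine
      rw [hym, hy0] at hrec
      have hfinal : I1 \ {x m} ∪ {t} = I \ {x m} ∪ {x 0} := by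
        ext u
        simp only [hI1def, Set.mem_union, Set.mem_diff, Set.mem_singleton_iff]
        constructor
        · rintro (⟨(⟨huI, hut⟩ | rfl), hum⟩ | rfl)
          · exact Or.inl ⟨huI, hum⟩
          · exact Or.inr rfl
          · exact Or.inl ⟨htI, htm⟩
        · rintro (⟨huI, hum⟩ | rfl)
          · by_cases hut : u = t
            · exact Or.inr hut
            · exact Or.inl ⟨Or.inl ⟨huI, hut⟩, hum⟩
          · refine Or.inl ⟨Or.inr rfl, ?_⟩
            intro h
            exact hx0 (h ▸ hxm)
      rw [hfinal] at hrec
      exact hreach1.trans hrec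
    · -- adjacency along y
      intro i hi
      rcases Nat.eq_zero_or_pos i with rfl | hi1
      · rw [hy0, hys 1 le_rfl, show istar + 1 - 1 = istar by omega]
        exact hstar.symm
      · rw [hys i hi1, hys (i+1) (by omega)]
        have h1 := hadj (istar + i - 1) (by omega)
        rwa [show istar + i - 1 + 1 = istar + (i+1) - 1 by omega] at h1
    · -- chordlessness of y
      intro i j' hj' hij' hadj'
      rcases Nat.eq_zero_or_pos i with rfl | hi1
      · rw [hy0, hys j' (by omega)] at hadj'
        exact hmaxattach (istar + j' - 1) (by omega) (by omega) hadj'.symm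
      · rw [hys i hi1, hys j' (by omega)] at hadj'
        exact hchord (istar + i - 1) (istar + j' - 1) (by omega) (by omega) hadj'
    · -- injectivity of y
      intro i j' hi hj' heq
      rcases Nat.eq_zero_or_pos i with rfl | hi1
      · rcases Nat.eq_zero_or_pos j' with rfl | hj1
        · rfl
        · rw [hy0, hys j' hj1] at heq
          exact absurd heq (hts (istar + j' - 1) (by omega) (by omega))
      · rcases Nat.eq_zero_or_pos j' with rfl | hj1
        · rw [hy0, hys i hi1] at heq
          exact absurd heq.symm (hts (istar + i - 1) (by omega) (by omega))
        · rw [hys i hi1, hys j' hj1] at heq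
          have := hinj (istar + i - 1) (istar + j' - 1) (by omega) (by omega) heq
          omega
    · -- y m' ∈ I1
      rw [hym]
      exact Or.inl ⟨hxm, fun h => htm h.symm⟩
    · -- y 0 ∉ I1
      rw [hy0]
      rintro (⟨-, hne⟩ | heq)
      · exact hne rfl
      · exact hx0 (heq ▸ htI)
    · -- freeness of t w.r.t. I1
      rw [hy0]
      rintro s (⟨hsI, -⟩ | rfl) hadj'
      · exact hInd t htI s hsI hadj'
      · exact hfree t htI hadj'.symm

/-- Extraction lemma: any token can be routed to a totally free vertex. -/
lemma extract {V : Type} {G : SimpleGraph V} (hconn : G.Connected) (hcf : ClawFree G)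
    {I : Set V} (hI : Indep G I) {a b : V} (ha : a ∈ I) (hb : b ∉ I)
    (hbfree : ∀ t ∈ I, ¬ G.Adj b t) :
    TSReach G I (I \ {a} ∪ {b}) := by
  obtain ⟨m, x, hx0, hxm, hadj, hchord, hinj⟩ := shortest_path_seq hconn b a
  have h := route hcf m x I hI hadj hchord hinj (by rw [hxm]; exact ha)
    (by rw [hx0]; exact hb) (by intro t ht; rw [hx0]; exact hbfree t ht)
  rwa [hxm, hx0] at h

lemma acyclic_induce_subset {V : Type} {G : SimpleGraph V} {S T : Set V} (h : T ⊆ S)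
    (hac : (G.induce S).IsAcyclic) : (G.induce T).IsAcyclic := by
  intro v c hc
  let f : G.induce T →g G.induce S :=
    ⟨Set.inclusion h, by intro a b hab; exact hab⟩
  exact hac (c.map f) (hc.map (f := f) (Set.inclusion_injective h))

lemma symmDiff_update {V : Type} {I J : Set V} {a b : V}
    (ha : a ∈ I \ J) (hb : b ∈ J \ I) :
    symmDiff (I \ {a} ∪ {b}) J = symmDiff I J \ {a, b} := by
  obtain ⟨haI, haJ⟩ := ha
  obtain ⟨hbJ, hbI⟩ := hb
  have hab : a ≠ b := fun h => hbI (h ▸ haI)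
  ext u
  simp only [Set.mem_symmDiff, Set.mem_union, Set.mem_diff, Set.mem_singleton_iff,
    Set.mem_insert_iff]
  constructor
  · rintro (⟨(⟨huI, hua⟩ | rfl), huJ⟩ | ⟨huJ, hnot⟩)
    · exact ⟨Or.inl ⟨huI, huJ⟩, by push_neg; exact ⟨hua, fun h => huJ (h ▸ hbJ)⟩⟩
    · exact absurd hbJ huJ
    · have hua : u ≠ a := fun h => haJ (h ▸ huJ)
      have huI : u ∉ I := fun h => hnot (Or.inl ⟨h, hua⟩)
      have hub : u ≠ b := fun h => hnot (Or.inr h)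
      exact ⟨Or.inr ⟨huJ, huI⟩, by push_neg; exact ⟨hua, hub⟩⟩
  · rintro ⟨(⟨huI, huJ⟩ | ⟨huJ, huI⟩), hnot⟩
    · push_neg at hnot
      exact Or.inl ⟨Or.inl ⟨huI, hnot.1⟩, huJ⟩
    · push_neg at hnot
      refine Or.inr ⟨huJ, ?_⟩
      rintro (⟨huI', -⟩ | rfl)
      · exact huI huI'
      · exact hnot.2 rfl


/-- If `G[I △ J]` is acyclic in a connected claw-free graph, then `I` and `J` are
connected by a token sliding sequence. -/
theorem stmt_4 {V : Type} [Fintype V] [DecidableEq V] (G : SimpleGraph V)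
    (hconn : G.Connected) (hcf : ClawFree G)
    (I J : Set V) (hI : Indep G I) (hJ : Indep G J) (hcard : I.ncard = J.ncard)
    (hacyc : (G.induce (symmDiff I J)).IsAcyclic) :
    TSReach G I J := by
  classical
  suffices H : ∀ n (I J : Set V), Indep G I → Indep G J → I.ncard = J.ncard →
      (G.induce (symmDiff I J)).IsAcyclic → (symmDiff I J).ncard = n → TSReach G I J from
    H _ I J hI hJ hcard hacyc rfl
  clear hI hJ hcard hacyc I J
  intro n
  induction n using Nat.strong_induction_on with
  | _ n IHn =>
  intro I J hI hJ hcard hacyc hn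
  by_cases hIJ : I = J
  · rw [hIJ]
    exact Relation.ReflTransGen.refl
  have hAne : (I \ J).Nonempty := by
    rw [Set.nonempty_iff_ne_empty]
    intro h
    have hsub : I ⊆ J := by rwa [Set.diff_eq_empty] at h
    exact hIJ (Set.eq_of_subset_of_ncard_le hsub hcard.ge (Set.toFinite J))
  have hBne : (J \ I).Nonempty := by
    rw [Set.nonempty_iff_ne_empty]
    intro h
    have hsub : J ⊆ I := by rwa [Set.diff_eq_empty] at h
    exact hIJ (Set.eq_of_subset_of_ncard_le hsub hcard.le (Set.toFinite I)).symm
  -- the common recursion steps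
  have hlt' : ∀ a b : V, a ∈ I \ J → (symmDiff I J \ {a, b}).ncard < n := by
    intro a b ha
    rw [← hn]
    refine Set.ncard_lt_ncard ?_ (Set.toFinite _)
    refine ⟨Set.diff_subset, fun hsub => ?_⟩
    have hmem : a ∈ symmDiff I J := by
      rw [Set.mem_symmDiff]; exact Or.inl ⟨ha.1, ha.2⟩
    have h2 := hsub hmem
    rw [Set.mem_diff] at h2
    exact h2.2 (Or.inl rfl)
  have key : ∀ a b : V, a ∈ I \ J → b ∈ J \ I → Indep G (I \ {a} ∪ {b}) →
      TSReach G I (I \ {a} ∪ {b}) → TSReach G I J := by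
    intro a b ha hb hI' hreach
    have hsd := symmDiff_update ha hb
    have hcard' : (I \ {a} ∪ {b}).ncard = J.ncard := by
      rw [Set.union_singleton, Set.ncard_exchange hb.2 ha.1]
      exact hcard
    have hacyc' : (G.induce (symmDiff (I \ {a} ∪ {b}) J)).IsAcyclic :=
      acyclic_induce_subset (by rw [hsd]; exact Set.diff_subset) hacyc
    have hlt : (symmDiff (I \ {a} ∪ {b}) J).ncard < n := by
      rw [hsd]; exact hlt' a b ha
    exact hreach.trans (IHn _ hlt _ J hI' hJ hcard' hacyc' rfl)
  have keyJ : ∀ a b : V, a ∈ I \ J → b ∈ J \ I → Indep G (J \ {b} ∪ {a}) →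
      TSReach G J (J \ {b} ∪ {a}) → TSReach G I J := by
    intro a b ha hb hJ' hreach
    have hsd : symmDiff I (J \ {b} ∪ {a}) = symmDiff I J \ {a, b} := by
      rw [symmDiff_comm, symmDiff_update hb ha, symmDiff_comm, Set.pair_comm]
    have hcard' : I.ncard = (J \ {b} ∪ {a}).ncard := by
      rw [Set.union_singleton, Set.ncard_exchange ha.2 hb.1]
      exact hcard
    have hacyc' : (G.induce (symmDiff I (J \ {b} ∪ {a}))).IsAcyclic :=
      acyclic_induce_subset (by rw [hsd]; exact Set.diff_subset) hacyc
    have hlt : (symmDiff I (J \ {b} ∪ {a})).ncard < n := by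
      rw [hsd]; exact hlt' a b ha
    exact (IHn _ hlt I _ hI hJ' hcard' hacyc' rfl).trans (tsreach_symm hreach)
  by_cases h1 : ∃ b ∈ J \ I, ∀ t ∈ I, ¬ G.Adj b t
  · obtain ⟨b, hb, hbfree⟩ := h1
    obtain ⟨a, ha⟩ := hAne
    have hI' : Indep G (I \ {a} ∪ {b}) := by
      rintro u (⟨huI, -⟩ | rfl) v (⟨hvI, -⟩ | rfl) huv
      · exact hI u huI v hvI huv
      · exact hbfree u huI huv.symm
      · exact hbfree v hvI huv
      · exact G.irrefl huv
    exact key a b ha hb hI' (extract hconn hcf hI ha.1 hb.2 hbfree)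
  by_cases h2 : ∃ b ∈ J \ I, ∃ a ∈ I, G.Adj b a ∧ ∀ a' ∈ I, G.Adj b a' → a' = a
  · obtain ⟨b, hb, a, haI, hadjba, huniq⟩ := h2
    have haJ : a ∉ J := fun haJ => hJ b hb.1 a haJ hadjba
    have step := tsstep_slide hI haI hb.2 hadjba.symm
      (fun t ht htne hadj => htne (huniq t ht hadj))
    exact key a b ⟨haI, haJ⟩ hb step.2.1 (Relation.ReflTransGen.single step)
  by_cases h3 : ∃ a ∈ I \ J, ∀ t ∈ J, ¬ G.Adj a t
  · obtain ⟨a, ha, hafree⟩ := h3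
    obtain ⟨b, hb⟩ := hBne
    have hJ' : Indep G (J \ {b} ∪ {a}) := by
      rintro u (⟨huJ, -⟩ | rfl) v (⟨hvJ, -⟩ | rfl) huv
      · exact hJ u huJ v hvJ huv
      · exact hafree u huJ huv.symm
      · exact hafree v hvJ huv
      · exact G.irrefl huv
    exact keyJ a b ha hb hJ' (extract hconn hcf hJ hb.1 ha.2 hafree)
  by_cases h4 : ∃ a ∈ I \ J, ∃ b ∈ J, G.Adj a b ∧ ∀ b' ∈ J, G.Adj a b' → b' = b
  · obtain ⟨a, ha, b, hbJ, hadjab, huniq⟩ := h4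
    have hbI : b ∉ I := fun hbI => hI a ha.1 b hbI hadjab
    have step := tsstep_slide hJ hbJ ha.2 hadjab.symm
      (fun t ht htne hadj => htne (huniq t ht hadj))
    exact keyJ a b ha ⟨hbJ, hbI⟩ step.2.1 (Relation.ReflTransGen.single step)
  -- final case : every vertex of the symmetric difference has ≥ 2 neighbors there
  exfalso
  push_neg at h1 h2 h3 h4
  set D := symmDiff I J with hD
  have hdeg : ∀ u ∈ D, ∃ v w : V, v ∈ D ∧ w ∈ D ∧ v ≠ w ∧ G.Adj u v ∧ G.Adj u w := by
    intro u hu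
    rw [hD, Set.mem_symmDiff] at hu
    rcases hu with ⟨huI, huJ⟩ | ⟨huJ, huI⟩
    · -- u ∈ I \ J : use h3, h4
      obtain ⟨t, htJ, hadjt⟩ := h3 u ⟨huI, huJ⟩
      obtain ⟨t', ht'J, hadjt', ht'ne⟩ := h4 u ⟨huI, huJ⟩ t htJ hadjt
      have htI : t ∉ I := fun h => hI u huI t h hadjt
      have ht'I : t' ∉ I := fun h => hI u huI t' h hadjt'
      exact ⟨t, t', by rw [hD, Set.mem_symmDiff]; exact Or.inr ⟨htJ, htI⟩,
        by rw [hD, Set.mem_symmDiff]; exact Or.inr ⟨ht'J, ht'I⟩,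
        fun h => ht'ne h.symm, hadjt, hadjt'⟩
    · obtain ⟨t, htI, hadjt⟩ := h1 u ⟨huJ, huI⟩
      obtain ⟨t', ht'I, hadjt', ht'ne⟩ := h2 u ⟨huJ, huI⟩ t htI hadjt
      have htJ : t ∉ J := fun h => hJ u huJ t h hadjt
      have ht'J : t' ∉ J := fun h => hJ u huJ t' h hadjt'
      exact ⟨t, t', by rw [hD, Set.mem_symmDiff]; exact Or.inl ⟨htI, htJ⟩,
        by rw [hD, Set.mem_symmDiff]; exact Or.inl ⟨ht'I, ht'J⟩,
        fun h => ht'ne h.symm, hadjt, hadjt'⟩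
  obtain ⟨a, ha⟩ := hAne
  have haD : a ∈ D := by rw [hD, Set.mem_symmDiff]; exact Or.inl ⟨ha.1, ha.2⟩
  refine no_mindeg_two (G.induce D) ⟨⟨a, haD⟩⟩ ?_ hacyc
  rintro ⟨u, hu⟩
  obtain ⟨v, w, hvD, hwD, hvw, hadjv, hadjw⟩ := hdeg u hu
  exact ⟨⟨v, hvD⟩, ⟨w, hwD⟩, fun h => hvw (congrArg Subtype.val h), hadjv, hadjw⟩
end

section
/- Let G be a connected claw-free graph with diameter d, and let I and J be independent sets with |I| = |J| such that G[I △ J] contains no cycles. Then there exists a TS-sequence from I to J of length at most 2 · |I \ J| · d. -/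
open SimpleGraph

/-- In a path from u, at most one edge at u. -/
lemma firstEdge_unique {W : Type} {H : SimpleGraph W} {u v c c' : W} (p : H.Walk u v)
    (hp : p.IsPath) (h1 : s(u, c) ∈ p.edges) (h2 : s(u, c') ∈ p.edges) : c = c' := by
  cases p with
  | nil => simp at h1
  | cons h q =>
    rename_i x
    rw [SimpleGraph.Walk.cons_isPath_iff] at hp
    have key : ∀ z : W, s(u, z) ∈ (SimpleGraph.Walk.cons h q).edges → z = x := by
      intro z hz
      rw [SimpleGraph.Walk.edges_cons, List.mem_cons] at hz
      rcases hz with hz | hz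
      · exact (Sym2.congr_right.mp hz)
      · exact absurd (q.fst_mem_support_of_mem_edges hz) hp.2
    rw [key c h1, key c' h2]

/-- A finite graph in which every vertex has two distinct neighbors is not acyclic. -/
lemma not_acyclic_of_minDegree_two {W : Type} [Finite W] [Nonempty W] (H : SimpleGraph W)
    (hdeg : ∀ v : W, ∃ a b : W, a ≠ b ∧ H.Adj v a ∧ H.Adj v b) : ¬ H.IsAcyclic := by
  classical
  intro hac
  have := Fintype.ofFinite W
  set P : ℕ → Prop := fun n => ∃ (x y : W) (p : H.Walk x y), p.IsPath ∧ p.length = n with hP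
  have hP0 : P 0 := ⟨Classical.arbitrary W, _, SimpleGraph.Walk.nil, SimpleGraph.Walk.IsPath.nil, rfl⟩
  set N := Nat.findGreatest P (Fintype.card W) with hN
  have hPN : P N := Nat.findGreatest_spec (Nat.zero_le _) hP0
  obtain ⟨x, y, p, hp, hlen⟩ := hPN
  -- every neighbor of x lies on p
  have hsupp : ∀ c : W, H.Adj x c → c ∈ p.support := by
    intro c hc
    by_contra hcs
    have hp' : (SimpleGraph.Walk.cons hc.symm p).IsPath :=
      SimpleGraph.Walk.IsPath.cons hp hcs
    have hle : N + 1 ≤ N := by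
      have hcard : N + 1 ≤ Fintype.card W := by
        have := hp'.length_lt
        simp only [SimpleGraph.Walk.length_cons, hlen] at this
        omega
      refine Nat.le_findGreatest hcard ⟨c, y, _, hp', by simp [hlen]⟩
    omega
  obtain ⟨a, b, hab, hxa, hxb⟩ := hdeg x
  have hedge : s(x, a) ∉ p.edges ∨ s(x, b) ∉ p.edges := by
    by_contra hcon
    push_neg at hcon
    exact hab (firstEdge_unique p hp hcon.1 hcon.2)
  obtain ⟨c, hxc, hce⟩ : ∃ c : W, H.Adj x c ∧ s(x, c) ∉ p.edges := by
    rcases hedge with h | h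
    exacts [⟨a, hxa, h⟩, ⟨b, hxb, h⟩]
  have hcsup : c ∈ p.support := hsupp c hxc
  set q := p.takeUntil c hcsup with hq
  have hqp : q.IsPath := hp.takeUntil hcsup
  have hcyc : (SimpleGraph.Walk.cons hxc.symm q).IsCycle := by
    rw [SimpleGraph.Walk.cons_isCycle_iff]
    refine ⟨hqp, fun hmem => hce ?_⟩
    have := SimpleGraph.Walk.edges_takeUntil_subset p hcsup hmem
    rwa [Sym2.eq_swap] at this
  exact hac (c := SimpleGraph.Walk.cons hxc.symm q) hcyc

/-- Acyclicity of induced graph is monotone under subsets. -/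
lemma acyclic_mono {V : Type} {G : SimpleGraph V} {S' S : Set V} (h : S' ⊆ S)
    (hac : (G.induce S).IsAcyclic) : (G.induce S').IsAcyclic := by
  intro v c hc
  let f : G.induce S' →g G.induce S :=
    ⟨Set.inclusion h, by intro a b hab; exact hab⟩
  have hinj : Function.Injective f := Set.inclusion_injective h
  exact hac (c := c.map f) ((SimpleGraph.Walk.map_isCycle_iff_of_injective hinj).mpr hc)

/-- There is a vertex of `J \ I` with at most one neighbor in `I`. -/
lemma exists_light {V : Type} [Fintype V] (G : SimpleGraph V) (hcf : ClawFree G)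
    {I J : Set V} (hI : Indep G I) (hJ : Indep G J) (hne : (J \ I).Nonempty)
    (heq : (I \ J).ncard = (J \ I).ncard)
    (hacyc : (G.induce (symmDiff I J)).IsAcyclic) :
    ∃ w ∈ J \ I, ({x ∈ I | G.Adj w x}).ncard ≤ 1 := by
  classical
  by_contra hcon
  push_neg at hcon
  have hcon' : ∀ w ∈ J \ I, 2 ≤ ({x ∈ I | G.Adj w x}).ncard := fun w hw => hcon w hw
  -- neighbors of w ∈ J\I inside I are in I\J
  have hnbr : ∀ w ∈ J \ I, ∀ x ∈ I, G.Adj w x → x ∈ I \ J := by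
    intro w hw x hx hadj
    refine ⟨hx, fun hxJ => hJ w hw.1 x hxJ hadj⟩
  set A := (I \ J).toFinite.toFinset with hA
  set B := (J \ I).toFinite.toFinset with hB
  have hmemA : ∀ x, x ∈ A ↔ x ∈ I \ J := fun x => Set.Finite.mem_toFinset _
  have hmemB : ∀ x, x ∈ B ↔ x ∈ J \ I := fun x => Set.Finite.mem_toFinset _
  set f : V → ℕ := fun w => (A.filter (fun a => G.Adj w a)).card with hf
  set g : V → ℕ := fun a => (B.filter (fun b => G.Adj a b)).card with hg
  have hsum : ∑ w ∈ B, f w = ∑ a ∈ A, g a := by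
    simp only [hf, hg, Finset.card_filter]
    rw [Finset.sum_comm]
    congr 1; ext a; congr 1; ext w
    simp [G.adj_comm]
  have hflow : ∀ w ∈ B, 2 ≤ f w := by
    intro w hw
    rw [hmemB] at hw
    have hset : {x ∈ I | G.Adj w x} = ↑(A.filter (fun a => G.Adj w a)) := by
      ext x
      simp only [Set.mem_setOf_eq, Finset.coe_filter, hmemA]
      constructor
      · rintro ⟨hx, hadj⟩; exact ⟨hnbr w hw x hx hadj, hadj⟩
      · rintro ⟨hx, hadj⟩; exact ⟨hx.1, hadj⟩
    have := hcon' w hw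
    rwa [hset, Set.ncard_coe_finset] at this
  have hgup : ∀ a ∈ A, g a ≤ 2 := by
    intro a ha
    by_contra hlt
    push_neg at hlt
    obtain ⟨b1, b2, b3, hb1, hb2, hb3, h12, h13, h23⟩ := Finset.two_lt_card_iff.mp hlt
    simp only [Finset.mem_filter, hmemB] at hb1 hb2 hb3
    exact hcf ⟨a, b1, b2, b3, hb1.2, hb2.2, hb3.2, h12, h13, h23,
      hJ b1 hb1.1.1 b2 hb2.1.1, hJ b1 hb1.1.1 b3 hb3.1.1, hJ b2 hb2.1.1 b3 hb3.1.1⟩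
  have hcards : A.card = B.card := by
    rw [hA, hB, ← Set.ncard_eq_toFinset_card _ (I \ J).toFinite,
      ← Set.ncard_eq_toFinset_card _ (J \ I).toFinite]
    exact heq
  have hglow : ∀ a ∈ A, 2 ≤ g a := by
    by_contra hcon2
    push_neg at hcon2
    obtain ⟨a0, ha0, ha0lt⟩ := hcon2
    have h1 : ∑ a ∈ A, g a < ∑ a ∈ A, 2 :=
      Finset.sum_lt_sum (fun a ha => hgup a ha) ⟨a0, ha0, by omega⟩
    have h2 : ∑ w ∈ B, 2 ≤ ∑ w ∈ B, f w := Finset.sum_le_sum hflow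
    simp only [Finset.sum_const, smul_eq_mul] at h1 h2
    omega
  -- now min degree 2 in induced graph on symmDiff
  have hmemS : ∀ x, x ∈ symmDiff I J ↔ (x ∈ I \ J ∨ x ∈ J \ I) := by
    intro x
    rw [Set.symmDiff_def]
    exact Set.mem_union _ _ _
  haveI : Nonempty ↥(symmDiff I J) := by
    obtain ⟨w, hw⟩ := hne
    exact ⟨⟨w, (hmemS w).mpr (Or.inr hw)⟩⟩
  have hdeg : ∀ v : ↥(symmDiff I J), ∃ a b : ↥(symmDiff I J), a ≠ b ∧
      (G.induce (symmDiff I J)).Adj v a ∧ (G.induce (symmDiff I J)).Adj v b := by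
    intro v
    rcases (hmemS v.1).mp v.2 with hv | hv
    · -- v ∈ I \ J : two neighbors in J \ I
      have h2 : 2 ≤ g v.1 := hglow v.1 ((hmemA v.1).mpr hv)
      obtain ⟨b1, b2, hb1, hb2, h12⟩ := Finset.one_lt_card_iff.mp
        (show 1 < (B.filter (fun b => G.Adj (v:V) b)).card from lt_of_lt_of_le one_lt_two h2)
      simp only [Finset.mem_filter, hmemB] at hb1 hb2
      refine ⟨⟨b1, (hmemS _).mpr (Or.inr hb1.1)⟩, ⟨b2, (hmemS _).mpr (Or.inr hb2.1)⟩,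
        fun hc => h12 (congrArg Subtype.val hc), ?_, ?_⟩
      · exact hb1.2
      · exact hb2.2
    · -- v ∈ J \ I : two neighbors in I
      have h2 : 2 ≤ ({x ∈ I | G.Adj v.1 x}).ncard := hcon' v.1 hv
      obtain ⟨x1, x2, hx1, hx2, h12⟩ := (Set.one_lt_ncard_iff (Set.toFinite _)).mp
        (lt_of_lt_of_le one_lt_two h2)
      simp only [Set.mem_setOf_eq] at hx1 hx2
      have m1 : x1 ∈ I \ J := hnbr v.1 hv x1 hx1.1 hx1.2
      have m2 : x2 ∈ I \ J := hnbr v.1 hv x2 hx2.1 hx2.2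
      refine ⟨⟨x1, (hmemS _).mpr (Or.inl m1)⟩, ⟨x2, (hmemS _).mpr (Or.inl m2)⟩,
        fun hc => h12 (congrArg Subtype.val hc), hx1.2, hx2.2⟩
  exact not_acyclic_of_minDegree_two (G.induce (symmDiff I J)) hdeg hacyc

/-- gluing of TS sequences -/
lemma seq_glue {V : Type} {G : SimpleGraph V} {A B C : Set V} {m1 m2 : ℕ}
    {f1 f2 : ℕ → Set V}
    (h10 : f1 0 = A) (h1m : f1 m1 = B) (h1s : ∀ i < m1, TSStep G (f1 i) (f1 (i+1)))
    (h20 : f2 0 = B) (h2m : f2 m2 = C) (h2s : ∀ i < m2, TSStep G (f2 i) (f2 (i+1))) :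
    ∃ f : ℕ → Set V, f 0 = A ∧ f (m1 + m2) = C ∧
      ∀ i < m1 + m2, TSStep G (f i) (f (i+1)) := by
  refine ⟨fun i => if i < m1 then f1 i else f2 (i - m1), ?_, ?_, ?_⟩
  · by_cases h : 0 < m1
    · simp [h, h10]
    · have hm1 : m1 = 0 := by omega
      simp only [h, if_neg]
      rw [hm1]
      simpa [h20] using (hm1 ▸ h1m : f1 0 = B) ▸ h10.symm ▸ rfl
  · have : ¬ (m1 + m2 < m1) := by omega
    simp only [this, if_false]
    simpa using h2m
  · intro i hi
    by_cases h1 : i + 1 < m1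
    · have h0 : i < m1 := by omega
      simp only [h0, h1, if_true]
      exact h1s i h0
    · by_cases h0 : i < m1
      · have he : i + 1 = m1 := by omega
        simp only [h0, h1, if_true, if_false]
        have : f2 (i + 1 - m1) = f1 (i+1) := by
          rw [he]; simp [h20, ← h1m, he]
        rw [this]
        exact h1s i h0
      · simp only [h0, h1, if_false]
        have hge : m1 ≤ i := by omega
        have : i + 1 - m1 = (i - m1) + 1 := by omega
        rw [this]
        exact h2s (i - m1) (by omega)

lemma seq_single {V : Type} {G : SimpleGraph V} {A B : Set V} (h : TSStep G A B) :
    ∃ f : ℕ → Set V, f 0 = A ∧ f 1 = B ∧ ∀ i < 1, TSStep G (f i) (f (i+1)) := by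
  refine ⟨fun i => if i = 0 then A else B, rfl, rfl, ?_⟩
  intro i hi
  have : i = 0 := by omega
  subst this
  simpa using h

/-- A single slide is a TS step. -/
lemma slide_step {V : Type} {G : SimpleGraph V} {A : Set V} {a b : V}
    (ha : a ∈ A) (hb : b ∉ A) (hadj : G.Adj a b)
    (h1 : Indep G A) (h2 : Indep G (insert b (A \ {a}))) :
    TSStep G A (insert b (A \ {a})) := by
  refine ⟨h1, h2, a, b, hadj, ?_, ?_⟩
  · ext x
    simp only [Set.mem_diff, Set.mem_insert_iff, Set.mem_singleton_iff]
    constructor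
    · rintro ⟨hxA, hnot⟩
      by_contra hxa
      exact hnot (Or.inr ⟨hxA, hxa⟩)
    · rintro rfl
      refine ⟨ha, ?_⟩
      rintro (rfl | ⟨-, hne⟩)
      · exact hb ha
      · exact hne rfl
  · ext x
    simp only [Set.mem_diff, Set.mem_insert_iff, Set.mem_singleton_iff]
    constructor
    · rintro ⟨rfl | ⟨h, -⟩, hxA⟩
      · rfl
      · exact absurd h hxA
    · rintro rfl
      exact ⟨Or.inl rfl, hb⟩

/-- The token jump simulation lemma for claw-free graphs. -/
lemma jump {V : Type} [Fintype V] {G : SimpleGraph V} (hcf : ClawFree G)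
    (hconn : G.Connected) :
    ∀ (k : ℕ) (I : Set V) (u w : V), G.dist u w ≤ k → u ∈ I → (w = u ∨ w ∉ I) →
    Indep G I → Indep G (insert w (I \ {u})) →
    ∃ (m : ℕ) (f : ℕ → Set V), f 0 = I ∧ f m = insert w (I \ {u}) ∧
      (∀ i < m, TSStep G (f i) (f (i+1))) ∧ m ≤ 2 * G.dist u w := by
  intro k
  induction k with
  | zero =>
    intro I u w hk hu hw hI hI'
    have h0 : G.dist u w = 0 := by omega
    have huw : u = w := ((hconn u w).dist_eq_zero_iff).mp h0
    subst huw
    refine ⟨0, fun _ => I, rfl, ?_, by omega, by omega⟩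
    rw [Set.insert_diff_singleton, Set.insert_eq_self.mpr hu]
  | succ k ih =>
    intro I u w hk hu hw hI hI'
    by_cases huw : w = u
    · subst huw
      refine ⟨0, fun _ => I, rfl, ?_, by omega, by omega⟩
      rw [Set.insert_diff_singleton, Set.insert_eq_self.mpr hu]
    · have hwI : w ∉ I := hw.resolve_left huw
      have hne : u ≠ w := fun h => huw h.symm
      obtain ⟨p, hp⟩ := (hconn u w).exists_walk_length_eq_dist
      have hdpos : 0 < G.dist u w := hconn.pos_dist_of_ne hne
      cases p with
      | nil => rw [SimpleGraph.Walk.length_nil] at hp; omega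
      | cons huy q =>
        rename_i y
        rw [SimpleGraph.Walk.length_cons] at hp
        have hyI : y ∉ I := fun h => hI u hu y h huy
        have hdyw : G.dist y w ≤ G.dist u w - 1 := by
          have := SimpleGraph.dist_le q
          omega
        have hyu : y ≠ u := (huy.ne).symm
        by_cases hZ : ∃ z, z ∈ I ∧ z ≠ u ∧ G.Adj y z
        · -- blocked case
          obtain ⟨z, hzI, hzu, hyz⟩ := hZ
          have huniq : ∀ x, x ∈ I → x ≠ u → G.Adj y x → x = z := by
            intro x hx hxu hyx
            by_contra hxz
            exact hcf ⟨y, u, z, x, huy.symm, hyz, hyx, Ne.symm hzu, Ne.symm hxu,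
              fun h => hxz h.symm, hI u hu z hzI, hI u hu x hx, hI z hzI x hx⟩
          have hd2 : 2 ≤ G.dist u w := by
            by_contra h
            have hq0 : q.length = 0 := by omega
            have hyw : y = w := SimpleGraph.Walk.eq_of_length_eq_zero hq0
            exact hI' w (Set.mem_insert _ _) z (Set.mem_insert_of_mem _ ⟨hzI, hzu⟩)
              (hyw ▸ hyz)
          have hnuw : ¬ G.Adj u w := by
            intro h
            have := SimpleGraph.dist_eq_one_iff_adj.mpr h
            omega
          have hNw : ∀ x ∈ I, ¬ G.Adj w x := by
            intro x hx hadj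
            by_cases hxu : x = u
            · subst hxu; exact hnuw hadj.symm
            · exact hI' w (Set.mem_insert _ _) x (Set.mem_insert_of_mem _ ⟨hx, hxu⟩) hadj
          cases q with
          | nil => rw [SimpleGraph.Walk.length_nil] at hp; omega
          | cons hyp2 r =>
            rename_i p2
            rw [SimpleGraph.Walk.length_cons] at hp
            have hdp2w : G.dist p2 w ≤ G.dist u w - 2 := by
              have := SimpleGraph.dist_le r
              omega
            have hup2 : 2 ≤ G.dist u p2 := by
              have htri := hconn.dist_triangle (u := u) (v := p2) (w := w)
              omega
            have hnup2 : ¬ G.Adj u p2 := by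
              intro h
              have := SimpleGraph.dist_eq_one_iff_adj.mpr h
              omega
            have hneup2 : u ≠ p2 := by
              intro h
              rw [h, SimpleGraph.dist_self] at hup2
              omega
            have hdzw : G.dist z w ≤ G.dist u w - 1 := by
              by_cases hzp2 : z = p2
              · subst hzp2; omega
              · by_cases hadj : G.Adj z p2
                · have htri := hconn.dist_triangle (u := z) (v := p2) (w := w)
                  have h1 : G.dist z p2 = 1 := SimpleGraph.dist_eq_one_iff_adj.mpr hadj
                  omega
                · exact absurd (⟨y, u, z, p2, huy.symm, hyz, hyp2, Ne.symm hzu,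
                    hneup2, hzp2, hI u hu z hzI, hnup2, hadj⟩ :
                    ∃ v a b c, G.Adj v a ∧ G.Adj v b ∧ G.Adj v c ∧ a ≠ b ∧ a ≠ c ∧ b ≠ c ∧
                      ¬G.Adj a b ∧ ¬G.Adj a c ∧ ¬G.Adj b c) hcf
            have hnyw : ¬ G.Adj y w := by
              intro hadj
              exact hcf ⟨y, u, z, w, huy.symm, hyz, hadj, Ne.symm hzu,
                fun h => hwI (h ▸ hu), fun h => hwI (h ▸ hzI),
                hI u hu z hzI, hnuw, fun h => hNw z hzI h.symm⟩
            have hynew : y ≠ w := fun h => hnuw (h ▸ huy)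
            have hIz' : Indep G (insert w (I \ {z})) := by
              intro a ha b hb hadj
              rcases ha with rfl | ha <;> rcases hb with rfl | hb
              · exact G.irrefl hadj
              · exact hNw b hb.1 hadj
              · exact hNw a ha.1 hadj.symm
              · exact hI a ha.1 b hb.1 hadj
            obtain ⟨m1, f1, h10, h1m, h1s, h1b⟩ := ih I z w (by omega) hzI (Or.inr hwI)
              hI hIz'
            set I2 := insert w (I \ {z}) with hI2def
            set I3 := insert y (I2 \ {u}) with hI3def
            have hkey : ∀ x, x ∈ I3 → x = y ∨ x = w ∨ (x ∈ I ∧ x ≠ z ∧ x ≠ u) := by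
              intro x hx
              rcases hx with rfl | ⟨hx2, hxu⟩
              · exact Or.inl rfl
              · rcases hx2 with rfl | hx
                · exact Or.inr (Or.inl rfl)
                · exact Or.inr (Or.inr ⟨hx.1, hx.2, hxu⟩)
            have huI2 : u ∈ I2 := Set.mem_insert_of_mem _ ⟨hu, Ne.symm hzu⟩
            have hyI2 : y ∉ I2 := by
              rintro (h | h)
              · exact hynew h
              · exact hyI h.1
            have hzI2 : z ∉ I2 := by
              rintro (h | h)
              · exact hwI (h ▸ hzI)
              · exact h.2 rfl
            have hI3indep : Indep G I3 := by
              intro a ha b hb hadj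
              rcases hkey a ha with rfl | rfl | ⟨haI, haz, hau⟩ <;>
                rcases hkey b hb with rfl | rfl | ⟨hbI, hbz, hbu⟩
              · exact G.irrefl hadj
              · exact hnyw hadj
              · exact hbz (huniq b hbI hbu hadj)
              · exact hnyw hadj.symm
              · exact G.irrefl hadj
              · exact hNw b hbI hadj
              · exact haz (huniq a haI hau hadj.symm)
              · exact hNw a haI hadj.symm
              · exact hI a haI b hbI hadj
            have hzI3 : z ∉ I3 := by
              intro h
              rcases hkey z h with h | h | h
              · exact hyI (h ▸ hzI)
              · exact hwI (h ▸ hzI)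
              · exact h.2.1 rfl
            have hyI3 : y ∈ I3 := Set.mem_insert _ _
            -- the final set is obtained from I3 by sliding y to z
            have hI4eq : insert z (I3 \ {y}) = insert w (I \ {u}) := by
              ext x
              simp only [Set.mem_insert_iff, Set.mem_diff, Set.mem_singleton_iff]
              constructor
              · rintro (rfl | ⟨hx3, hxy⟩)
                · exact Or.inr ⟨hzI, hzu⟩
                · rcases hkey x hx3 with rfl | rfl | ⟨hxI, _, hxu⟩
                  · exact absurd rfl hxy
                  · exact Or.inl rfl
                  · exact Or.inr ⟨hxI, hxu⟩
              · rintro (rfl | ⟨hxI, hxu⟩)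
                · refine Or.inr ⟨?_, fun h => hynew h.symm⟩
                  rw [hI3def]
                  exact Set.mem_insert_of_mem _ ⟨Set.mem_insert _ _, fun h => hwI (h ▸ hu)⟩
                · by_cases hxz : x = z
                  · exact Or.inl hxz
                  · refine Or.inr ⟨?_, fun h => hyI (h ▸ hxI)⟩
                    rw [hI3def]
                    exact Set.mem_insert_of_mem _
                      ⟨Set.mem_insert_of_mem _ ⟨hxI, hxz⟩, hxu⟩
            have hstepA : TSStep G I2 I3 := slide_step huI2 hyI2 huy hIz' hI3indep
            have hstepB : TSStep G I3 (insert w (I \ {u})) := by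
              rw [← hI4eq]
              exact slide_step hyI3 hzI3 hyz hI3indep (hI4eq ▸ hI')
            obtain ⟨g1, hg10, hg1m, hg1s⟩ := seq_single hstepA
            obtain ⟨g2, hg20, hg2m, hg2s⟩ := seq_single hstepB
            obtain ⟨g3, hg30, hg3m, hg3s⟩ := seq_glue hg10 hg1m hg1s hg20 hg2m hg2s
            obtain ⟨g4, hg40, hg4m, hg4s⟩ := seq_glue h10 h1m h1s hg30 hg3m hg3s
            exact ⟨m1 + (1 + 1), g4, hg40, hg4m, hg4s, by omega⟩
        · -- free case
          push_neg at hZ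
          set I1 := insert y (I \ {u}) with hI1def
          have hI1indep : Indep G I1 := by
            intro a ha b hb hadj
            rcases ha with rfl | ha <;> rcases hb with rfl | hb
            · exact G.irrefl hadj
            · exact hZ b hb.1 hb.2 hadj
            · exact hZ a ha.1 ha.2 hadj.symm
            · exact hI a ha.1 b hb.1 hadj
          have hstep : TSStep G I I1 := slide_step hu hyI huy hI hI1indep
          have hd1 : I1 \ {y} = I \ {u} :=
            Set.insert_diff_self_of_notMem (fun h => hyI h.1)
          have hrec := ih I1 y w (by omega) (Set.mem_insert _ _) ?_ hI1indep ?_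
          · obtain ⟨m1, f1, h10, h1m, h1s, h1b⟩ := hrec
            rw [hd1] at h1m
            obtain ⟨g1, hg10, hg1m, hg1s⟩ := seq_single hstep
            obtain ⟨g2, hg20, hg2m, hg2s⟩ := seq_glue hg10 hg1m hg1s h10 h1m h1s
            exact ⟨1 + m1, g2, hg20, hg2m, hg2s, by omega⟩
          · by_cases hwy : w = y
            · exact Or.inl hwy
            · refine Or.inr ?_
              rintro (h | h)
              · exact hwy h
              · exact hwI h.1
          · rw [hd1]
            exact hI'


/-- If `G[I △ J]` is acyclic in a connected claw-free graph of diameter `d`, then there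
is a TS-sequence from `I` to `J` of length at most `2 · |I \ J| · d`. -/
theorem stmt_5 {V : Type} [Fintype V] [DecidableEq V] (G : SimpleGraph V)
    (hconn : G.Connected) (hcf : ClawFree G) (d : ℕ) (hd : G.diam = d)
    (I J : Set V) (hI : Indep G I) (hJ : Indep G J) (hcard : I.ncard = J.ncard)
    (hacyc : (G.induce (symmDiff I J)).IsAcyclic) :
    ∃ (m : ℕ) (f : ℕ → Set V), f 0 = I ∧ f m = J ∧
      (∀ i < m, TSStep G (f i) (f (i+1))) ∧ m ≤ 2 * (I \ J).ncard * d := by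
  classical
  have hV : Nonempty V := hconn.nonempty
  have hdle : ∀ u w : V, G.dist u w ≤ d := by
    intro u w
    rw [← hd]
    apply SimpleGraph.dist_le_diam
    obtain ⟨a, b, hab⟩ := SimpleGraph.exists_edist_eq_ediam_of_finite (G := G)
    rw [← hab]
    exact (SimpleGraph.edist_ne_top_iff_reachable).mpr (hconn a b)
  suffices H : ∀ (n : ℕ) (I : Set V), Indep G I → I.ncard = J.ncard →
      (G.induce (symmDiff I J)).IsAcyclic → (I \ J).ncard = n →
      ∃ (m : ℕ) (f : ℕ → Set V), f 0 = I ∧ f m = J ∧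
        (∀ i < m, TSStep G (f i) (f (i+1))) ∧ m ≤ 2 * n * d by
    exact H ((I \ J).ncard) I hI hcard hacyc rfl
  intro n
  induction n with
  | zero =>
    intro I hI hc hac h0
    have hIJ : I = J := by
      have hsub : I ⊆ J := by
        have he : I \ J = ∅ := (Set.ncard_eq_zero (Set.toFinite _)).mp h0
        exact Set.diff_eq_empty.mp he
      exact Set.eq_of_subset_of_ncard_le hsub (le_of_eq hc.symm) (Set.toFinite _)
    exact ⟨0, fun _ => J, by rw [hIJ], rfl, by omega, by omega⟩
  | succ n ih =>
    intro I hI hc hac hn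
    have hdiffcard : (I \ J).ncard = (J \ I).ncard := by
      have h1 := Set.ncard_inter_add_ncard_diff_eq_ncard I J (Set.toFinite _)
      have h2 := Set.ncard_inter_add_ncard_diff_eq_ncard J I (Set.toFinite _)
      rw [Set.inter_comm J I] at h2
      omega
    have hJIne : (J \ I).Nonempty := Set.nonempty_of_ncard_ne_zero (by omega)
    obtain ⟨w, hwJI, hw1⟩ := exists_light G hcf hI hJ hJIne hdiffcard hac
    have hIJne : (I \ J).Nonempty := Set.nonempty_of_ncard_ne_zero (by omega)
    obtain ⟨u, huIJ, huniq⟩ : ∃ u ∈ I \ J, ∀ x ∈ I, G.Adj w x → x = u := by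
      rcases Set.eq_empty_or_nonempty {x ∈ I | G.Adj w x} with hN | ⟨u0, hu0⟩
      · obtain ⟨u0, hu0⟩ := hIJne
        refine ⟨u0, hu0, fun x hx hadj => ?_⟩
        have : x ∈ {x ∈ I | G.Adj w x} := ⟨hx, hadj⟩
        rw [hN] at this
        exact absurd this (Set.notMem_empty x)
      · have hone : ∀ {a b : V}, a ∈ {x ∈ I | G.Adj w x} → b ∈ {x ∈ I | G.Adj w x} →
            a = b := (Set.ncard_le_one_iff (Set.toFinite _)).mp hw1
        refine ⟨u0, ⟨hu0.1, fun hu0J => hJ w hwJI.1 u0 hu0J hu0.2⟩, ?_⟩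
        intro x hx hadj
        exact hone ⟨hx, hadj⟩ hu0
    have hwI : w ∉ I := hwJI.2
    have huI : u ∈ I := huIJ.1
    have hI' : Indep G (insert w (I \ {u})) := by
      intro a ha b hb hadj
      rcases ha with rfl | ha <;> rcases hb with rfl | hb
      · exact G.irrefl hadj
      · exact hb.2 (huniq b hb.1 hadj)
      · exact ha.2 (huniq a ha.1 hadj.symm)
      · exact hI a ha.1 b hb.1 hadj
    obtain ⟨m1, f1, h10, h1m, h1s, h1b⟩ := jump hcf hconn (G.dist u w) I u w le_rfl huI
      (Or.inr hwI) hI hI'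
    have hcard' : (insert w (I \ {u})).ncard = J.ncard := by
      rw [Set.ncard_exchange hwI huI]
      exact hc
    have hd' : insert w (I \ {u}) \ J = (I \ J) \ {u} := by
      ext x
      simp only [Set.mem_diff, Set.mem_insert_iff, Set.mem_singleton_iff]
      constructor
      · rintro ⟨rfl | ⟨hxI, hxu⟩, hxJ⟩
        · exact absurd hwJI.1 hxJ
        · exact ⟨⟨hxI, hxJ⟩, hxu⟩
      · rintro ⟨⟨hxI, hxJ⟩, hxu⟩
        exact ⟨Or.inr ⟨hxI, hxu⟩, hxJ⟩
    have hc' : ((insert w (I \ {u})) \ J).ncard = n := by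
      rw [hd', Set.ncard_diff_singleton_of_mem huIJ, hn]
      omega
    have hsub : symmDiff (insert w (I \ {u})) J ⊆ symmDiff I J := by
      intro x hx
      rw [Set.symmDiff_def] at hx ⊢
      rcases hx with hx | hx
      · rw [hd'] at hx
        exact Set.mem_union_left _ hx.1
      · refine Set.mem_union_right _ ⟨hx.1, fun hxI => ?_⟩
        by_cases hxu : x = u
        · exact huIJ.2 (hxu ▸ hx.1)
        · exact hx.2 (Set.mem_insert_of_mem _ ⟨hxI, hxu⟩)
    have hac' := acyclic_mono hsub hac
    obtain ⟨m2, f2, h20, h2m, h2s, h2b⟩ := ih (insert w (I \ {u})) hI' hcard' hac' hc'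
    obtain ⟨g, hg0, hgm, hgs⟩ := seq_glue h10 h1m h1s h20 h2m h2s
    refine ⟨m1 + m2, g, hg0, hgm, hgs, ?_⟩
    have hduw : G.dist u w ≤ d := hdle u w
    have hring : 2 * (n+1) * d = 2 * n * d + 2 * d := by ring
    omega
end

section
/- Let G be a connected claw-free graph and let I and J be independent sets with |I| = |J| = k. Then I and J lie in the same component of the token sliding graph TS_k(G) if and only if they lie in the same component of the token jumping graph TJ_k(G). -/
open SimpleGraph

section Aux

variable {V : Type} {G : SimpleGraph V}

lemma indep_move {I : Set V} {u v : V} (hI : Indep G I)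
    (hnb : ∀ w ∈ I, w ≠ u → ¬ G.Adj v w) : Indep G (insert v (I \ {u})) := by
  intro x hx y hy
  rcases hx with rfl | ⟨hxI, hxu⟩
  · rcases hy with rfl | ⟨hyI, hyu⟩
    · simp
    · exact hnb _ hyI (by simpa using hyu)
  · rcases hy with rfl | ⟨hyI, hyu⟩
    · intro hadj; exact hnb _ hxI (by simpa using hxu) hadj.symm
    · exact hI _ hxI _ hyI

lemma diff_move_left {I : Set V} {u v : V} (hu : u ∈ I) (hv : v ∉ I) (hvu : v ≠ u) :
    I \ (insert v (I \ {u})) = {u} := by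
  ext x
  simp only [Set.mem_diff, Set.mem_insert_iff, Set.mem_singleton_iff, not_or, not_and, not_not]
  constructor
  · rintro ⟨hxI, -, h2⟩; exact h2 hxI
  · rintro rfl; exact ⟨hu, fun h => hvu h.symm, fun _ => rfl⟩

lemma diff_move_right {I : Set V} {u v : V} (hv : v ∉ I) :
    (insert v (I \ {u})) \ I = {v} := by
  ext x
  simp only [Set.mem_diff, Set.mem_insert_iff, Set.mem_singleton_iff]
  constructor
  · rintro ⟨rfl | ⟨hxI, -⟩, hxI'⟩
    · rfl
    · exact absurd hxI hxI'
  · rintro rfl; exact ⟨Or.inl rfl, hv⟩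

lemma tsStep_move {I : Set V} {u v : V} (hI : Indep G I) (hu : u ∈ I) (hv : v ∉ I)
    (hvu : v ≠ u) (hadj : G.Adj u v) (hnb : ∀ w ∈ I, w ≠ u → ¬ G.Adj v w) :
    TSStep G I (insert v (I \ {u})) :=
  ⟨hI, indep_move hI hnb, u, v, hadj, diff_move_left hu hv hvu, diff_move_right hv⟩

/-- Key lemma: in a connected claw-free graph, a single token jump from `u` to `v`
can be simulated by token slides. Induction on an upper bound `d` for `dist u v`. -/
lemma jump_reach (hconn : G.Connected) (hcf : ClawFree G) :
    ∀ d : ℕ, ∀ I : Set V, ∀ u v : V, G.dist u v ≤ d → Indep G I → u ∈ I → v ∉ I →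
      (∀ w ∈ I, w ≠ u → ¬ G.Adj v w) → TSReach G I (insert v (I \ {u})) := by
  intro d
  induction d with
  | zero =>
    intro I u v hd hI hu hv hnb
    have huv : u = v := hconn.dist_eq_zero_iff.mp (Nat.le_zero.mp hd)
    exact absurd (huv ▸ hu) hv
  | succ d ih =>
    intro I u v hd hI hu hv hnb
    have huv : u ≠ v := fun h => hv (h ▸ hu)
    by_cases hdle : G.dist u v ≤ d
    · exact ih I u v hdle hI hu hv hnb
    have hm : G.dist u v = d + 1 := le_antisymm hd (not_le.mp hdle)
    obtain ⟨p, hp⟩ := hconn.exists_walk_length_eq_dist u v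
    rw [hm] at hp
    cases p with
    | nil => simp at hp
    | cons h1 q =>
      rename_i a
      -- h1 : G.Adj u a, q : G.Walk a v, q.length = d
      have hql : q.length = d := by simpa using hp
      have haI : a ∉ I := fun h' => hI u hu a h' h1
      have hau : a ≠ u := fun h' => G.loopless.irrefl u (h' ▸ h1)
      have hdav : G.dist a v ≤ d := hql ▸ SimpleGraph.dist_le q
      cases q with
      | nil =>
        -- a = v, so u and v are adjacent: single slide
        exact Relation.ReflTransGen.single (tsStep_move hI hu hv (Ne.symm huv) h1 hnb)
      | cons h2 r =>
        rename_i b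
        -- h2 : G.Adj a b, r : G.Walk b v
        have hrl : r.length = d - 1 := by
          have : r.length + 1 = d := by simpa using hql
          omega
        have hd1 : 1 ≤ d := by
          have : r.length + 1 = d := by simpa using hql
          omega
        have nadj_uv : ¬ G.Adj u v := by
          intro hadj
          have := SimpleGraph.dist_le (Walk.cons hadj Walk.nil)
          simp only [Walk.length_cons, Walk.length_nil] at this
          omega
        have hub_ne : u ≠ b := by
          rintro rfl
          have := SimpleGraph.dist_le r
          omega
        have nadj_ub : ¬ G.Adj u b := by
          intro hadj
          have := SimpleGraph.dist_le (Walk.cons hadj r)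
          simp only [Walk.length_cons] at this
          omega
        by_cases hcase : ∃ w, w ∈ I ∧ w ≠ u ∧ G.Adj a w
        · -- Case B: token w blocks a; jump w to v first, then u to w.
          obtain ⟨w, hwI, hwu, hwadj⟩ := hcase
          have hwv_ne : w ≠ v := fun h' => hv (h' ▸ hwI)
          have nadj_vw : ¬ G.Adj v w := hnb w hwI hwu
          have nadj_uw : ¬ G.Adj u w := hI u hu w hwI
          -- w = b, or w is adjacent to b (by claw-freeness at a)
          have hwb : w = b ∨ G.Adj w b := by
            by_cases hwb' : w = b
            · exact Or.inl hwb'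
            · right
              by_contra hn
              exact hcf ⟨a, u, w, b, h1.symm, hwadj, h2, Ne.symm hwu, hub_ne, hwb',
                nadj_uw, nadj_ub, hn⟩
          -- if r has length 0 then b = v, contradiction in both subcases
          have hbv : b ≠ v := by
            rintro rfl
            rcases hwb with rfl | hadj
            · exact hwv_ne rfl
            · exact nadj_vw hadj.symm
          have hd2 : 2 ≤ d := by
            cases r with
            | nil => exact absurd rfl hbv
            | cons h3 s => simp only [Walk.length_cons] at hrl; omega
          have hdwv : G.dist w v ≤ d := by
            rcases hwb with rfl | hadj
            · have := SimpleGraph.dist_le r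
              omega
            · have := SimpleGraph.dist_le (Walk.cons hadj r)
              simp only [Walk.length_cons] at this
              omega
          have hnb1 : ∀ x ∈ I, x ≠ w → ¬ G.Adj v x := by
            intro x hx hxw
            by_cases hxu : x = u
            · subst hxu; exact fun h' => nadj_uv h'.symm
            · exact hnb x hx hxu
          have step1 : TSReach G I (insert v (I \ {w})) :=
            ih I w v hdwv hI hwI hv hnb1
          set I1 : Set V := insert v (I \ {w}) with hI1def
          have hI1 : Indep G I1 := indep_move hI hnb1
          have huI1 : u ∈ I1 := Or.inr ⟨hu, by simpa using Ne.symm hwu⟩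
          have hwI1 : w ∉ I1 := by
            simp [hI1def, hwv_ne]
          have hdu_w : G.dist u w ≤ d := by
            have := SimpleGraph.dist_le (Walk.cons h1 (Walk.cons hwadj Walk.nil))
            simp only [Walk.length_cons, Walk.length_nil] at this
            omega
          have hnb2 : ∀ x ∈ I1, x ≠ u → ¬ G.Adj w x := by
            rintro x (rfl | ⟨hxI, -⟩) hxu
            · exact fun h' => nadj_vw h'.symm
            · exact hI w hwI x hxI
          have step2 : TSReach G I1 (insert w (I1 \ {u})) :=
            ih I1 u w hdu_w hI1 huI1 hwI1 hnb2
          have heq : insert w (I1 \ {u}) = insert v (I \ {u}) := by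
            ext x
            simp only [hI1def, Set.mem_insert_iff, Set.mem_diff, Set.mem_singleton_iff]
            constructor
            · rintro (rfl | ⟨rfl | ⟨hxI, hxw⟩, hxu⟩)
              · exact Or.inr ⟨hwI, hwu⟩
              · exact Or.inl rfl
              · exact Or.inr ⟨hxI, hxu⟩
            · rintro (rfl | ⟨hxI, hxu⟩)
              · exact Or.inr ⟨Or.inl rfl, Ne.symm huv⟩
              · by_cases hxw : x = w
                · exact Or.inl hxw
                · exact Or.inr ⟨Or.inr ⟨hxI, hxw⟩, hxu⟩
          exact step1.trans (heq ▸ step2)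
        · -- Case A: slide u to a, then continue by induction.
          push_neg at hcase
          have hAnb : ∀ w ∈ I, w ≠ u → ¬ G.Adj a w := fun w hw hwu => hcase w hw hwu
          have step1 : TSStep G I (insert a (I \ {u})) :=
            tsStep_move hI hu haI hau h1 hAnb
          set I1 : Set V := insert a (I \ {u}) with hI1def
          have hI1 : Indep G I1 := indep_move hI hAnb
          have haI1 : a ∈ I1 := Or.inl rfl
          have hva : v ≠ a := fun h' => nadj_uv (h' ▸ h1)
          have hvI1 : v ∉ I1 := by
            simp only [hI1def, Set.mem_insert_iff, Set.mem_diff, Set.mem_singleton_iff]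
            push_neg
            exact ⟨hva, fun h' => absurd h' hv⟩
          have hnb1 : ∀ x ∈ I1, x ≠ a → ¬ G.Adj v x := by
            rintro x (rfl | ⟨hxI, hxu⟩) hxa
            · exact absurd rfl hxa
            · exact hnb x hxI (by simpa using hxu)
          have step2 : TSReach G I1 (insert v (I1 \ {a})) :=
            ih I1 a v hdav hI1 haI1 hvI1 hnb1
          have heq : insert v (I1 \ {a}) = insert v (I \ {u}) := by
            ext x
            simp only [hI1def, Set.mem_insert_iff, Set.mem_diff, Set.mem_singleton_iff]
            constructor
            · rintro (rfl | ⟨rfl | ⟨hxI, hxu⟩, hxa⟩)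
              · exact Or.inl rfl
              · exact absurd rfl hxa
              · exact Or.inr ⟨hxI, hxu⟩
            · rintro (rfl | ⟨hxI, hxu⟩)
              · exact Or.inl rfl
              · exact Or.inr ⟨Or.inr ⟨hxI, hxu⟩, fun h' => haI (h' ▸ hxI)⟩
          exact Relation.ReflTransGen.head step1 (heq ▸ step2)

end Aux

/-- In a connected claw-free graph, token sliding reachability coincides with
token jumping reachability. -/
theorem stmt_6 {V : Type} [Fintype V] [DecidableEq V] (G : SimpleGraph V)
    (hconn : G.Connected) (hcf : ClawFree G)
    (I J : Set V) (hI : Indep G I) (hJ : Indep G J) (hcard : I.ncard = J.ncard) :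
    TSReach G I J ↔ TJReach G I J := by
  constructor
  · intro h
    exact Relation.ReflTransGen.mono
      (fun A B hs => ⟨hs.1, hs.2.1, by
        obtain ⟨u, v, -, h1, h2⟩ := hs.2.2
        exact ⟨u, v, h1, h2⟩⟩) _ _ h
  · intro h
    clear hJ hcard
    induction h with
    | refl => exact Relation.ReflTransGen.refl
    | @tail b c hab hbc ih =>
      refine ih.trans ?_
      obtain ⟨hIb, hIc, u, v, h1, h2⟩ := hbc
      have h1' := Set.ext_iff.mp h1
      have h2' := Set.ext_iff.mp h2
      have hu := (h1' u).mpr rfl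
      have hv := (h2' v).mpr rfl
      have hceq : c = insert v (b \ {u}) := by
        ext x
        have a1 := h1' x
        have a2 := h2' x
        simp only [Set.mem_diff, Set.mem_singleton_iff, Set.mem_insert_iff] at a1 a2 ⊢
        tauto
      have hnb : ∀ w ∈ b, w ≠ u → ¬ G.Adj v w := by
        intro w hw hwu
        have hwc : w ∈ c := by
          by_contra hwc
          exact hwu ((h1' w).mp ⟨hw, hwc⟩)
        exact hIc v hv.1 w hwc
      rw [hceq]
      exact jump_reach hconn hcf (G.dist u v) b u v le_rfl hIb hu.1 hv.2 hnb
end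

section
/- Let G be a graph and let I, J be independent sets with |I| = |J| such that G[I △ J] contains no even cycles. Then there exists a TJ-sequence from I to J of length exactly |I \ J|. -/
open SimpleGraph

lemma tjstep_symm {V : Type} {G : SimpleGraph V} {I J : Set V} (h : TJStep G I J) :
    TJStep G J I := by
  obtain ⟨h1, h2, u, v, hu, hv⟩ := h
  exact ⟨h2, h1, v, u, hv, hu⟩

lemma edge_at_start {W : Type} {H : SimpleGraph W} {v u y z : W} (q : H.Walk v u)
    (hq : q.IsPath) (hy : s(v, y) ∈ q.edges) (hz : s(v, z) ∈ q.edges) : y = z := by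
  induction q with
  | nil => simp at hy
  | @cons a b c hadj p ih =>
    rw [Walk.cons_isPath_iff] at hq
    rw [Walk.edges_cons, List.mem_cons] at hy hz
    have keyy : y = b := by
      rcases hy with hy | hy
      · rcases Sym2.eq_iff.mp hy with ⟨_, h2⟩ | ⟨h1, h2⟩
        · exact h2
        · exact absurd h1 hadj.ne
      · exact absurd (Walk.fst_mem_support_of_mem_edges p hy) hq.2
    have keyz : z = b := by
      rcases hz with hz | hz
      · rcases Sym2.eq_iff.mp hz with ⟨_, h2⟩ | ⟨h1, h2⟩
        · exact h2
        · exact absurd h1 hadj.ne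
      · exact absurd (Walk.fst_mem_support_of_mem_edges p hz) hq.2
    rw [keyy, keyz]

lemma exists_leaf {W : Type} [Fintype W] [Nonempty W] (H : SimpleGraph W)
    (hac : ∀ (v : W) (c : H.Walk v v), ¬c.IsCycle) :
    ∃ x : W, ∀ y z : W, H.Adj x y → H.Adj x z → y = z := by
  classical
  by_contra hcon
  push_neg at hcon
  have claim : ∀ n : ℕ, ∃ (u v : W) (p : H.Walk u v), p.IsPath ∧ p.length = n := by
    intro n
    induction n with
    | zero => exact ⟨Classical.arbitrary W, Classical.arbitrary W, Walk.nil, by simp, rfl⟩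
    | succ n ih =>
      obtain ⟨u, v, p, hp, hlen⟩ := ih
      obtain ⟨y, z, hy, hz, hyz⟩ := hcon v
      have key : ∃ w, H.Adj v w ∧ s(v, w) ∉ p.edges := by
        by_contra hk
        push_neg at hk
        have h1 : s(v, y) ∈ p.reverse.edges := by
          rw [Walk.edges_reverse, List.mem_reverse]; exact hk y hy
        have h2 : s(v, z) ∈ p.reverse.edges := by
          rw [Walk.edges_reverse, List.mem_reverse]; exact hk z hz
        exact hyz (edge_at_start p.reverse hp.reverse h1 h2)
      obtain ⟨w, hw, hwe⟩ := key
      by_cases hws : w ∈ p.support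
      · exfalso
        have hr : (p.dropUntil w hws).IsPath := hp.dropUntil hws
        have hre : s(v, w) ∉ (p.dropUntil w hws).edges :=
          fun h => hwe (Walk.edges_dropUntil_subset p hws h)
        exact hac v (Walk.cons hw (p.dropUntil w hws))
          ((Walk.cons_isCycle_iff _ _).mpr ⟨hr, hre⟩)
      · refine ⟨w, u, Walk.cons hw.symm p.reverse, ?_, ?_⟩
        · rw [Walk.cons_isPath_iff]
          refine ⟨hp.reverse, ?_⟩
          rw [Walk.support_reverse, List.mem_reverse]; exact hws
        · simp [hlen]
  obtain ⟨u, v, p, hp, hlen⟩ := claim (Fintype.card W)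
  exact absurd hlen (Nat.ne_of_lt hp.length_lt)

lemma acyc_transfer {V : Type} (G : SimpleGraph V) {S S' : Set V} (hsub : S' ⊆ S)
    (hac : ∀ (v : ↑S) (c : (G.induce S).Walk v v), ¬c.IsCycle) :
    ∀ (v : ↑S') (c : (G.induce S').Walk v v), ¬c.IsCycle := by
  intro v c hc
  have hemb := SimpleGraph.induceHomOfLE G hsub
  exact hac _ (c.map hemb.toHom) (hc.map hemb.injective)

lemma adj_flip {V : Type} {G : SimpleGraph V} {I J : Set V} (hI : Indep G I) (hJ : Indep G J)
    {a b : ↑(symmDiff I J)} (hab : (G.induce (symmDiff I J)).Adj a b) :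
    ¬((a : V) ∈ I ↔ (b : V) ∈ I) := by
  have hadj : G.Adj a b := hab
  have ha := a.2
  have hb := b.2
  rw [Set.mem_symmDiff] at ha hb
  intro hiff
  rcases ha with ⟨haI, haJ⟩ | ⟨haJ, haI⟩
  · rcases hb with ⟨hbI, _⟩ | ⟨hbJ, hbI⟩
    · exact hI _ haI _ hbI hadj
    · exact hbI (hiff.mp haI)
  · rcases hb with ⟨hbI, _⟩ | ⟨hbJ, hbI⟩
    · exact haI (hiff.mpr hbI)
    · exact hJ _ haJ _ hbJ hadj

lemma parity_walk {V : Type} {G : SimpleGraph V} {I J : Set V} (hI : Indep G I) (hJ : Indep G J) :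
    ∀ (a b : ↑(symmDiff I J)) (w : (G.induce (symmDiff I J)).Walk a b),
      (Even w.length ↔ ((a : V) ∈ I ↔ (b : V) ∈ I)) := by
  intro a b w
  induction w with
  | nil => simp
  | @cons x y z h p ih =>
    rw [Walk.length_cons]
    have hflip := adj_flip hI hJ h
    rw [Nat.even_add_one, ih]
    constructor
    · intro hne
      by_cases hx : (x : V) ∈ I
      · constructor
        · intro _
          by_contra hz
          exact hne (by tauto)
        · intro _; exact hx
      · constructor
        · intro h'; exact absurd h' hx
        · intro hz
          exact absurd (by tauto : ((y:V) ∈ I ↔ (z:V) ∈ I)) hne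
    · intro hxz hyz
      exact hflip (hxz.trans hyz.symm)

lemma step_exists {V : Type} [Fintype V] [DecidableEq V] (G : SimpleGraph V) (I J : Set V)
    (hI : Indep G I) (hJ : Indep G J) (v u₀ : V) (hv : v ∈ J \ I) (hu : u₀ ∈ I \ J)
    (hnb : ∀ w ∈ I, G.Adj v w → w = u₀) :
    TJStep G I (insert v (I \ {u₀})) ∧ Indep G (insert v (I \ {u₀})) ∧
      (insert v (I \ {u₀})).ncard = I.ncard ∧
      (insert v (I \ {u₀})) \ J = (I \ J) \ {u₀} ∧
      symmDiff (insert v (I \ {u₀})) J ⊆ symmDiff I J := by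
  obtain ⟨hvJ, hvI⟩ := hv
  obtain ⟨huI, huJ⟩ := hu
  have hI' : Indep G (insert v (I \ {u₀})) := by
    intro a ha b hb hadj
    rcases ha with rfl | ⟨haI, hau⟩
    · rcases hb with rfl | ⟨hbI, hbu⟩
      · exact hadj.ne rfl
      · exact hbu (hnb b hbI hadj)
    · rcases hb with rfl | ⟨hbI, hbu⟩
      · exact hau (hnb a haI hadj.symm)
      · exact hI _ haI _ hbI hadj
  have hd1 : I \ (insert v (I \ {u₀})) = {u₀} := by
    ext x
    simp only [Set.mem_diff, Set.mem_insert_iff, Set.mem_singleton_iff]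
    constructor
    · rintro ⟨hxI, hx⟩
      push_neg at hx
      by_contra hxu
      exact hxu (hx.2 hxI)
    · rintro rfl
      refine ⟨huI, ?_⟩
      push_neg
      exact ⟨fun h => hvI (h ▸ huI), fun _ => rfl⟩
  have hd2 : (insert v (I \ {u₀})) \ I = {v} := by
    ext x
    simp only [Set.mem_diff, Set.mem_insert_iff, Set.mem_singleton_iff]
    constructor
    · rintro ⟨rfl | ⟨hxI, _⟩, hx⟩
      · rfl
      · exact absurd hxI hx
    · rintro rfl
      exact ⟨Or.inl rfl, hvI⟩
  refine ⟨⟨hI, hI', u₀, v, hd1, hd2⟩, hI', ?_, ?_, ?_⟩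
  · rw [Set.ncard_insert_of_notMem (fun h => hvI h.1) (Set.toFinite _),
      Set.ncard_diff_singleton_of_mem huI]
    have : 1 ≤ I.ncard := (Set.ncard_pos (Set.toFinite _)).mpr ⟨u₀, huI⟩
    omega
  · ext x
    simp only [Set.mem_diff, Set.mem_insert_iff, Set.mem_singleton_iff]
    constructor
    · rintro ⟨rfl | ⟨hxI, hxu⟩, hxJ⟩
      · exact absurd hvJ hxJ
      · exact ⟨⟨hxI, hxJ⟩, hxu⟩
    · rintro ⟨⟨hxI, hxJ⟩, hxu⟩
      exact ⟨Or.inr ⟨hxI, hxu⟩, hxJ⟩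
  · intro x hx
    rw [Set.mem_symmDiff] at hx ⊢
    simp only [Set.mem_insert_iff, Set.mem_diff, Set.mem_singleton_iff] at hx
    rcases hx with ⟨rfl | ⟨hxI, hxu⟩, hxJ⟩ | ⟨hxJ, hx2⟩
    · exact absurd hvJ hxJ
    · exact Or.inl ⟨hxI, hxJ⟩
    · push_neg at hx2
      refine Or.inr ⟨hxJ, fun hxI => ?_⟩
      exact huJ (hx2.2 hxI ▸ hxJ)

lemma diffcard {V : Type} [Fintype V] {I J : Set V} (hcard : I.ncard = J.ncard) :
    (I \ J).ncard = (J \ I).ncard := by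
  have h1 : (I \ J).ncard = I.ncard - (I ∩ J).ncard := by
    rw [← Set.diff_self_inter, Set.ncard_diff Set.inter_subset_left (Set.toFinite _)]
  have h2 : (J \ I).ncard = J.ncard - (J ∩ I).ncard := by
    rw [← Set.diff_self_inter, Set.ncard_diff Set.inter_subset_left (Set.toFinite _)]
  rw [h1, h2, hcard, Set.inter_comm]

lemma prepend {V : Type} {G : SimpleGraph V} {I I' J : Set V} {n : ℕ}
    (h1 : TJStep G I I')
    (hP : ∃ f : ℕ → Set V, f 0 = I' ∧ f n = J ∧ ∀ i < n, TJStep G (f i) (f (i + 1))) :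
    ∃ f : ℕ → Set V, f 0 = I ∧ f (n + 1) = J ∧ ∀ i < n + 1, TJStep G (f i) (f (i + 1)) := by
  obtain ⟨g, hg0, hgn, hgs⟩ := hP
  refine ⟨fun i => if i = 0 then I else g (i - 1), by simp, by simp [hgn], ?_⟩
  intro i hi
  match i with
  | 0 => simpa [hg0] using h1
  | (j + 1) =>
    simpa using hgs j (by omega)

lemma reverse_seq {V : Type} {G : SimpleGraph V} {I J : Set V} {n : ℕ}
    (hP : ∃ f : ℕ → Set V, f 0 = J ∧ f n = I ∧ ∀ i < n, TJStep G (f i) (f (i + 1))) :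
    ∃ f : ℕ → Set V, f 0 = I ∧ f n = J ∧ ∀ i < n, TJStep G (f i) (f (i + 1)) := by
  obtain ⟨g, hg0, hgn, hgs⟩ := hP
  refine ⟨fun i => g (n - i), by simp [hgn], by simp [hg0], ?_⟩
  intro i hi
  have hstep := hgs (n - (i + 1)) (by omega)
  have heq : n - (i + 1) + 1 = n - i := by omega
  rw [heq] at hstep
  exact tjstep_symm hstep

lemma main_ind {V : Type} [Fintype V] [DecidableEq V] : ∀ (n : ℕ) (G : SimpleGraph V)
    (I J : Set V), Indep G I → Indep G J → I.ncard = J.ncard →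
    (∀ (v : ↑(symmDiff I J)) (c : (G.induce (symmDiff I J)).Walk v v), ¬c.IsCycle) →
    (I \ J).ncard = n →
    ∃ f : ℕ → Set V, f 0 = I ∧ f n = J ∧ ∀ i < n, TJStep G (f i) (f (i + 1)) := by
  intro n
  induction n with
  | zero =>
    intro G I J hI hJ hcard hac hn
    have hsub : I ⊆ J := by
      rw [← Set.diff_eq_empty]
      exact (Set.ncard_eq_zero (Set.toFinite _)).mp hn
    have hIJ : I = J := Set.eq_of_subset_of_ncard_le hsub hcard.ge (Set.toFinite _)
    exact ⟨fun _ => I, rfl, hIJ.symm ▸ rfl, fun i hi => absurd hi (by omega)⟩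
  | succ n ih =>
    intro G I J hI hJ hcard hac hn
    have hIJne : (I \ J).Nonempty := Set.nonempty_of_ncard_ne_zero (by omega)
    have hJIcard : (J \ I).ncard = n + 1 := (diffcard hcard) ▸ hn
    have hJIne : (J \ I).Nonempty := Set.nonempty_of_ncard_ne_zero (by omega)
    haveI : Fintype ↑(symmDiff I J) := (Set.toFinite _).fintype
    haveI : Nonempty ↑(symmDiff I J) := by
      obtain ⟨a, ha⟩ := hIJne
      exact ⟨a, Set.mem_symmDiff.mpr (Or.inl ⟨ha.1, ha.2⟩)⟩
    obtain ⟨x, hleaf⟩ := exists_leaf (G.induce (symmDiff I J)) hac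
    by_cases hxI : (x : V) ∈ I
    · -- x ∈ I \ J ; swap roles, step from J
      have hxJ : (x : V) ∉ J := by
        have := x.2; rw [Set.mem_symmDiff] at this; tauto
      have hv : (x : V) ∈ I \ J := ⟨hxI, hxJ⟩
      -- find u₀ ∈ J \ I
      have hnbhood : ∃ u₀, u₀ ∈ J \ I ∧ ∀ w ∈ J, G.Adj (x : V) w → w = u₀ := by
        by_cases hex : ∃ u, u ∈ J ∧ G.Adj (x : V) u
        · obtain ⟨u, huJ, huA⟩ := hex
          have huI : u ∉ I := fun huI => hI _ huI _ hxI huA.symm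
          have humem : u ∈ symmDiff I J := Set.mem_symmDiff.mpr (Or.inr ⟨huJ, huI⟩)
          refine ⟨u, ⟨huJ, huI⟩, fun w hwJ hwA => ?_⟩
          have hwI : w ∉ I := fun hwI => hI _ hwI _ hxI hwA.symm
          have hwmem : w ∈ symmDiff I J := Set.mem_symmDiff.mpr (Or.inr ⟨hwJ, hwI⟩)
          have := hleaf ⟨w, hwmem⟩ ⟨u, humem⟩ hwA huA
          exact congrArg Subtype.val this
        · push_neg at hex
          obtain ⟨u₀, hu₀⟩ := hJIne
          exact ⟨u₀, hu₀, fun w hwJ hwA => absurd hwA (hex w hwJ)⟩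
      obtain ⟨u₀, hu₀, hnb⟩ := hnbhood
      obtain ⟨hstep, hJ', hcard', hdiff', hsub'⟩ :=
        step_exists G J I hJ hI (x : V) u₀ hv hu₀ hnb
      set J' := insert (x : V) (J \ {u₀}) with hJ'def
      have hsub2 : symmDiff J' I ⊆ symmDiff I J :=
        fun a ha => (symmDiff_comm I J) ▸ hsub' ha
      have hac' := acyc_transfer G hsub2 hac
      have hcard2 : J'.ncard = I.ncard := by rw [hcard']; exact hcard.symm
      have hdcard : (J' \ I).ncard = n := by
        rw [hdiff', Set.ncard_diff_singleton_of_mem hu₀, hJIcard]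
        omega
      have hP := ih G J' I hJ' hI hcard2 hac' hdcard
      exact reverse_seq (prepend hstep hP)
    · -- x ∈ J \ I ; step from I
      have hxJ : (x : V) ∈ J := by
        have := x.2; rw [Set.mem_symmDiff] at this; tauto
      have hv : (x : V) ∈ J \ I := ⟨hxJ, hxI⟩
      have hnbhood : ∃ u₀, u₀ ∈ I \ J ∧ ∀ w ∈ I, G.Adj (x : V) w → w = u₀ := by
        by_cases hex : ∃ u, u ∈ I ∧ G.Adj (x : V) u
        · obtain ⟨u, huI, huA⟩ := hex
          have huJ : u ∉ J := fun huJ => hJ _ huJ _ hxJ huA.symm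
          have humem : u ∈ symmDiff I J := Set.mem_symmDiff.mpr (Or.inl ⟨huI, huJ⟩)
          refine ⟨u, ⟨huI, huJ⟩, fun w hwI hwA => ?_⟩
          have hwJ : w ∉ J := fun hwJ => hJ _ hwJ _ hxJ hwA.symm
          have hwmem : w ∈ symmDiff I J := Set.mem_symmDiff.mpr (Or.inl ⟨hwI, hwJ⟩)
          have := hleaf ⟨w, hwmem⟩ ⟨u, humem⟩ hwA huA
          exact congrArg Subtype.val this
        · push_neg at hex
          obtain ⟨u₀, hu₀⟩ := hIJne
          exact ⟨u₀, hu₀, fun w hwI hwA => absurd hwA (hex w hwI)⟩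
      obtain ⟨u₀, hu₀, hnb⟩ := hnbhood
      obtain ⟨hstep, hI', hcard', hdiff', hsub'⟩ :=
        step_exists G I J hI hJ (x : V) u₀ hv hu₀ hnb
      set I' := insert (x : V) (I \ {u₀}) with hI'def
      have hac' := acyc_transfer G hsub' hac
      have hcard2 : I'.ncard = J.ncard := by rw [hcard']; exact hcard
      have hdcard : (I' \ J).ncard = n := by
        rw [hdiff', Set.ncard_diff_singleton_of_mem hu₀, hn]
        omega
      have hP := ih G I' J hI' hJ hcard2 hac' hdcard
      exact prepend hstep hP


/-- If `G[I △ J]` contains no even cycles, then there is a TJ-sequence from `I` to `J`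
of length exactly `|I \ J|`. -/
theorem stmt_7 {V : Type} [Fintype V] [DecidableEq V] (G : SimpleGraph V)
    (I J : Set V) (hI : Indep G I) (hJ : Indep G J) (hcard : I.ncard = J.ncard)
    (hnoeven : ∀ (v : ↑(symmDiff I J)) (w : (G.induce (symmDiff I J)).Walk v v),
      w.IsCycle → ¬ Even w.length) :
    ∃ f : ℕ → Set V, f 0 = I ∧ f ((I \ J).ncard) = J ∧
      ∀ i < (I \ J).ncard, TJStep G (f i) (f (i+1)) := by
  have hac : ∀ (v : ↑(symmDiff I J)) (c : (G.induce (symmDiff I J)).Walk v v), ¬c.IsCycle := by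
    intro v c hc
    exact hnoeven v c hc ((parity_walk hI hJ v v c).mpr Iff.rfl)
  exact main_ind ((I \ J).ncard) G I J hI hJ hcard hac rfl
end

section
/- Let G be a claw-free graph and let A and B be two independent sets such that every connected component of G[A △ B] is a cycle. Then for every vertex v: if v has no neighbor in A and v ∉ A, then v has no neighbor in B and v ∉ B. (Equivalently, N[v] ∩ A = ∅ implies N[v] ∩ B = ∅.) -/
open SimpleGraph

open Fin.CommRing in
/-- In a graph whose components are all cycles, every vertex has two distinct neighbors. -/
lemma two_nbrs {V : Type} (G : SimpleGraph V) (S : Set V)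
    (hcyc : ∀ comp : (G.induce S).ConnectedComponent,
      ∃ t : ℕ, 3 ≤ t ∧
        Nonempty (((G.induce S).induce comp.supp) ≃g cycleGraph t))
    {u : V} (hu : u ∈ S) :
    ∃ x y : V, x ∈ S ∧ y ∈ S ∧ x ≠ y ∧ G.Adj u x ∧ G.Adj u y := by
  set H := G.induce S with hH
  set u' : S := ⟨u, hu⟩
  set comp := H.connectedComponentMk u' with hcomp
  obtain ⟨t, ht, ⟨φ⟩⟩ := hcyc comp
  obtain ⟨n, rfl⟩ : ∃ n, t = n + 3 := ⟨t - 3, by omega⟩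
  have humem : u' ∈ comp.supp := rfl
  set p : Fin (n + 3) := φ ⟨u', humem⟩ with hp
  have hne : p + 1 ≠ p - 1 := by
    intro h
    have h2 : (2 : Fin (n + 3)) = 0 := by
      calc (2 : Fin (n+3)) = (p + 1) - (p - 1) := by ring
      _ = 0 := by rw [h]; ring
    have h3 : ((2 : Fin (n+3)) : ℕ) = 0 := by rw [h2]; rfl
    rw [Fin.val_two] at h3
    omega
  have hadj1 : (cycleGraph (n + 3)).Adj p (p + 1) := by
    rw [cycleGraph_adj]; right; ring_nf
  have hadj2 : (cycleGraph (n + 3)).Adj p (p - 1) := by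
    rw [cycleGraph_adj]; left; ring_nf
  set x' := φ.symm (p + 1) with hx'
  set y' := φ.symm (p - 1) with hy'
  have e : φ.symm p = ⟨u', humem⟩ := φ.toEquiv.symm_apply_apply _
  refine ⟨(x' : S), (y' : S), (x' : S).2, (y' : S).2, ?_, ?_, ?_⟩
  · intro h
    apply hne
    have hxy : x' = y' := by
      apply Subtype.ext; apply Subtype.ext; exact h
    exact φ.symm.toEquiv.injective hxy
  · have h1 : ((H.induce comp.supp)).Adj (φ.symm p) x' := φ.symm.map_adj_iff.mpr hadj1
    rw [e] at h1
    exact h1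
  · have h1 : ((H.induce comp.supp)).Adj (φ.symm p) y' := φ.symm.map_adj_iff.mpr hadj2
    rw [e] at h1
    exact h1

/-- If every component of `G[A △ B]` is a cycle, then any vertex with no closed
neighbor in `A` has no closed neighbor in `B`. -/
theorem stmt_10 {V : Type} [Fintype V] [DecidableEq V] (G : SimpleGraph V)
    (hcf : ClawFree G) (A B : Set V) (hA : Indep G A) (hB : Indep G B)
    (hcyc : ∀ comp : (G.induce (symmDiff A B)).ConnectedComponent,
      ∃ t : ℕ, 3 ≤ t ∧
        Nonempty (((G.induce (symmDiff A B)).induce comp.supp) ≃g cycleGraph t))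
    (v : V) (hv : v ∉ A ∧ ∀ u ∈ A, ¬ G.Adj v u) :
    v ∉ B ∧ ∀ u ∈ B, ¬ G.Adj v u := by
  obtain ⟨hvA, hvN⟩ := hv
  have hmem : ∀ w, w ∈ symmDiff A B ↔ (w ∈ A ∧ w ∉ B) ∨ (w ∈ B ∧ w ∉ A) := by
    intro w; rw [Set.mem_symmDiff]
  constructor
  · intro hvB
    have hvS : v ∈ symmDiff A B := (hmem v).mpr (Or.inr ⟨hvB, hvA⟩)
    obtain ⟨x, y, hxS, _, _, hvx, _⟩ := two_nbrs G (symmDiff A B) hcyc hvS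
    rcases (hmem x).mp hxS with ⟨hxA, _⟩ | ⟨hxB, _⟩
    · exact hvN x hxA hvx
    · exact hB v hvB x hxB hvx
  · intro u huB hadj
    have huA : u ∉ A := fun h => hvN u h hadj
    have huS : u ∈ symmDiff A B := (hmem u).mpr (Or.inr ⟨huB, huA⟩)
    obtain ⟨x, y, hxS, hyS, hxy, hux, huy⟩ := two_nbrs G (symmDiff A B) hcyc huS
    have hxA : x ∈ A := by
      rcases (hmem x).mp hxS with ⟨h, _⟩ | ⟨h, _⟩
      · exact h
      · exact absurd hux (hB u huB x h)
    have hyA : y ∈ A := by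
      rcases (hmem y).mp hyS with ⟨h, _⟩ | ⟨h, _⟩
      · exact h
      · exact absurd huy (hB u huB y h)
    exact hcf ⟨u, v, x, y, hadj.symm, hux, huy,
      fun h => hvA (h ▸ hxA), fun h => hvA (h ▸ hyA), hxy,
      fun h => hvN x hxA h, fun h => hvN y hyA h, hA x hxA y hyA⟩
end

section
/- Let G be a claw-free graph, I and J independent sets such that I is not a dominating set of G and G[I △ J] is a disjoint union of cycles. Then there is a TJ-sequence from I to J. -/
open SimpleGraph

section Rot
open Relation Function Set

lemma rot {V : Type} (G : SimpleGraph V) (K : Set V) (v : V) (m : ℕ) (hm : 1 ≤ m)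
    (a b : Fin m → V)
    (hK : Indep G K)
    (hainj : Function.Injective a) (hbinj : Function.Injective b)
    (haK : ∀ i, a i ∈ K) (hbK : ∀ i, b i ∉ K)
    (hvK : v ∉ K) (hvb : ∀ i, v ≠ b i)
    (hvadj : ∀ w, w ∈ K → ¬ G.Adj v w) (hvbadj : ∀ i, ¬ G.Adj v (b i))
    (hbb : ∀ i j, ¬ G.Adj (b i) (b j))
    (hbKadj : ∀ (i : Fin m) (w : V), w ∈ K → G.Adj (b i) w →
      ∃ j : Fin m, j.val ≤ i.val + 1 ∧ w = a j) :
    TJReach G K ((K \ Set.range a) ∪ Set.range b) := by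
  classical
  set K' : Set V := (K \ Set.range a) ∪ Set.range b with hK'
  set S : ℕ → Set V := fun j =>
    (K \ (a '' {l | l.val ≤ j})) ∪ ({v} ∪ (b '' {l | l.val < j})) with hS
  have hva : ∀ i, v ≠ a i := fun i h => hvK (h ▸ haK i)
  have hab : ∀ i j, a i ≠ b j := fun i j h => hbK j (h ▸ haK i)
  have memS : ∀ (j : ℕ) (x : V), x ∈ S j ↔
      (x ∈ K ∧ ¬ ∃ l : Fin m, l.val ≤ j ∧ a l = x) ∨ x = v ∨
      (∃ l : Fin m, l.val < j ∧ b l = x) := by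
    intro j x
    simp only [hS, Set.mem_union, Set.mem_diff, Set.mem_singleton_iff, Set.mem_image,
      Set.mem_setOf_eq, not_exists, not_and]
    try tauto
  have indepS : ∀ j : ℕ, Indep G (S j) := by
    intro j x hx y hy hadj
    rw [memS] at hx hy
    have hcross : ∀ (l : Fin m) (w : V), l.val < j → w ∈ K →
        (¬ ∃ l' : Fin m, l'.val ≤ j ∧ a l' = w) → ¬ G.Adj (b l) w := by
      intro l w hl hwK hwna hA
      obtain ⟨jj, hjj, rfl⟩ := hbKadj l w hwK hA
      exact hwna ⟨jj, by omega, rfl⟩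
    rcases hx with ⟨hxK, hxa⟩ | rfl | ⟨l, hl, rfl⟩ <;>
      rcases hy with ⟨hyK, hya⟩ | rfl | ⟨l', hl', rfl⟩
    · exact hK x hxK y hyK hadj
    · exact hvadj x hxK hadj.symm
    · exact hcross l' x hl' hxK hxa hadj.symm
    · exact hvadj y hyK hadj
    · exact G.irrefl hadj
    · exact hvbadj l' hadj
    · exact hcross l y hl hyK hya hadj
    · exact hvbadj l hadj.symm
    · exact hbb l l' hadj
  have step0 : TJStep G K (S 0) := by
    refine ⟨hK, indepS 0, a ⟨0, hm⟩, v, ?_, ?_⟩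
    · ext x
      simp only [Set.mem_diff, Set.mem_singleton_iff, memS]
      constructor
      · rintro ⟨hxK, hxS⟩
        have h1 : ¬¬∃ l : Fin m, l.val ≤ 0 ∧ a l = x := fun hn => hxS (Or.inl ⟨hxK, hn⟩)
        obtain ⟨l, hl, rfl⟩ := not_not.mp h1
        exact congrArg a (Fin.ext (show l.val = 0 by omega))
      · rintro rfl
        refine ⟨haK _, ?_⟩
        rintro (⟨-, hne⟩ | hv | ⟨l, hl, he⟩)
        · exact hne ⟨⟨0, hm⟩, le_refl 0, rfl⟩
        · exact hva _ hv.symm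
        · omega
    · ext x
      simp only [Set.mem_diff, Set.mem_singleton_iff, memS]
      constructor
      · rintro ⟨(⟨hxK, -⟩ | rfl | ⟨l, hl, -⟩), hxnK⟩
        · exact absurd hxK hxnK
        · rfl
        · omega
      · rintro rfl
        exact ⟨Or.inr (Or.inl rfl), hvK⟩
  have stepS : ∀ n : ℕ, n + 1 < m → TJStep G (S n) (S (n + 1)) := by
    intro n hn
    refine ⟨indepS n, indepS (n+1), a ⟨n+1, hn⟩, b ⟨n, by omega⟩, ?_, ?_⟩
    · ext x
      simp only [Set.mem_diff, Set.mem_singleton_iff, memS]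
      constructor
      · rintro ⟨(⟨hxK, hxa⟩ | rfl | ⟨l, hl, rfl⟩), hxS⟩
        · have h1 : ¬¬∃ l : Fin m, l.val ≤ n+1 ∧ a l = x :=
            fun hn2 => hxS (Or.inl ⟨hxK, hn2⟩)
          obtain ⟨l, hl, rfl⟩ := not_not.mp h1
          have : l.val = n + 1 := by
            rcases Nat.lt_or_ge l.val (n+1) with h | h
            · exact absurd ⟨l, by omega, rfl⟩ hxa
            · omega
          exact congrArg a (Fin.ext this)
        · exact absurd (Or.inr (Or.inl rfl)) hxS
        · exact absurd (Or.inr (Or.inr ⟨l, by omega, rfl⟩)) hxS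
      · rintro rfl
        refine ⟨Or.inl ⟨haK _, ?_⟩, ?_⟩
        · rintro ⟨l, hl, he⟩
          have : l.val = n + 1 := by rw [hainj he]
          omega
        · rintro (⟨-, hne⟩ | hv | ⟨l, hl, he⟩)
          · exact hne ⟨⟨n+1, hn⟩, le_refl _, rfl⟩
          · exact hva _ hv.symm
          · exact hab _ _ he.symm
    · ext x
      simp only [Set.mem_diff, Set.mem_singleton_iff, memS]
      constructor
      · rintro ⟨(⟨hxK, hxa⟩ | rfl | ⟨l, hl, rfl⟩), hxS⟩
        · exact absurd (Or.inl ⟨hxK, fun ⟨l, hl, he⟩ => hxa ⟨l, by omega, he⟩⟩) hxS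
        · exact absurd (Or.inr (Or.inl rfl)) hxS
        · have : l.val = n := by
            rcases Nat.lt_or_ge l.val n with h | h
            · exact absurd (Or.inr (Or.inr ⟨l, h, rfl⟩)) hxS
            · omega
          exact congrArg b (Fin.ext this)
      · rintro rfl
        refine ⟨Or.inr (Or.inr ⟨⟨n, by omega⟩, Nat.lt_succ_self n, rfl⟩), ?_⟩
        rintro (⟨hxK, -⟩ | hv | ⟨l, hl, he⟩)
        · exact hbK _ hxK
        · exact hvb _ hv.symm
        · have : l.val = n := by rw [hbinj he]
          omega
  have finalstep : TJStep G (S (m - 1)) K' := by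
    have hK'indep : Indep G K' := by
      intro x hx y hy hadj
      rcases hx with ⟨hxK, hxa⟩ | ⟨l, rfl⟩ <;> rcases hy with ⟨hyK, hya⟩ | ⟨l', rfl⟩
      · exact hK x hxK y hyK hadj
      · obtain ⟨jj, -, rfl⟩ := hbKadj l' x hxK hadj.symm
        exact hxa ⟨jj, rfl⟩
      · obtain ⟨jj, -, rfl⟩ := hbKadj l y hyK hadj
        exact hya ⟨jj, rfl⟩
      · exact hbb l l' hadj
    refine ⟨indepS (m-1), hK'indep, v, b ⟨m-1, by omega⟩, ?_, ?_⟩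
    · ext x
      simp only [Set.mem_diff, Set.mem_singleton_iff, memS, hK', Set.mem_union,
        Set.mem_range]
      constructor
      · rintro ⟨(⟨hxK, hxa⟩ | rfl | ⟨l, hl, rfl⟩), hxK'⟩
        · exact absurd (Or.inl ⟨hxK, fun ⟨l, he⟩ => hxa ⟨l, by omega, he⟩⟩) hxK'
        · rfl
        · exact absurd (Or.inr ⟨l, rfl⟩) hxK'
      · rintro rfl
        refine ⟨Or.inr (Or.inl rfl), ?_⟩
        rintro (⟨hvK', -⟩ | ⟨l, he⟩)
        · exact hvK hvK'
        · exact hvb l he.symm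
    · ext x
      simp only [Set.mem_diff, Set.mem_singleton_iff, memS, hK', Set.mem_union,
        Set.mem_range]
      constructor
      · rintro ⟨⟨hxK, hxa⟩ | ⟨l, rfl⟩, hxS⟩
        · exact absurd (Or.inl ⟨hxK, fun ⟨l, hl, he⟩ => hxa ⟨l, he⟩⟩) hxS
        · have : l.val = m - 1 := by
            rcases Nat.lt_or_ge l.val (m-1) with h | h
            · exact absurd (Or.inr (Or.inr ⟨l, h, rfl⟩)) hxS
            · omega
          exact congrArg b (Fin.ext this)
      · rintro rfl
        refine ⟨Or.inr ⟨_, rfl⟩, ?_⟩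
        rintro (⟨hxK2, -⟩ | hv | ⟨l, hl, he⟩)
        · exact hbK _ hxK2
        · exact hvb _ hv.symm
        · have : l.val = m - 1 := by rw [hbinj he]
          omega
  have reach : ∀ j : ℕ, j < m → TJReach G K (S j) := by
    intro j
    induction j with
    | zero => exact fun _ => Relation.ReflTransGen.single step0
    | succ n ih => exact fun hj => Relation.ReflTransGen.tail (ih (by omega)) (stepS n hj)
  exact Relation.ReflTransGen.tail (reach (m-1) (by omega)) finalstep

end Rot

section Cyc
open Function

lemma cycData {V : Type} (G : SimpleGraph V) (D : Set V)
    (c : (G.induce D).ConnectedComponent)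
    (h : ∃ t : ℕ, 3 ≤ t ∧ Nonempty (((G.induce D).induce c.supp) ≃g cycleGraph t)) :
    ∃ (k : ℕ), 1 ≤ k ∧ ∃ f : Fin (k+2) → V,
      Function.Injective f ∧
      (∀ u, ∃ h2 : f u ∈ D, (G.induce D).connectedComponentMk ⟨f u, h2⟩ = c) ∧
      (∀ x (hx : x ∈ D), (G.induce D).connectedComponentMk ⟨x, hx⟩ = c → ∃ u, f u = x) ∧
      (∀ u w, G.Adj (f u) (f w) ↔ (u - w = 1 ∨ w - u = 1)) := by
  obtain ⟨t, ht, ⟨e⟩⟩ := h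
  obtain ⟨k, rfl⟩ : ∃ k, t = k + 2 := ⟨t - 2, by omega⟩
  refine ⟨k, by omega, fun u => ((e.symm u : c.supp) : D), ?_, ?_, ?_, ?_⟩
  · intro u w huw
    exact e.symm.toEquiv.injective (Subtype.ext (Subtype.ext huw))
  · intro u
    refine ⟨((e.symm u : c.supp) : D).property, ?_⟩
    have hs := (e.symm u).property
    rw [SimpleGraph.ConnectedComponent.mem_supp_iff] at hs
    convert hs
  · intro x hx hc
    have hs : (⟨x, hx⟩ : D) ∈ c.supp := by
      rw [SimpleGraph.ConnectedComponent.mem_supp_iff]; exact hc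
    refine ⟨e ⟨⟨x, hx⟩, hs⟩, ?_⟩
    show ((e.symm (e ⟨⟨x, hx⟩, hs⟩) : c.supp) : D).val = x
    rw [e.symm_apply_apply]
  · intro u w
    have h1 : G.Adj ((e.symm u : c.supp) : D) ((e.symm w : c.supp) : D) ↔
        ((G.induce D).induce c.supp).Adj (e.symm u) (e.symm w) := Iff.rfl
    rw [h1, e.symm.map_rel_iff]
    exact cycleGraph_adj

end Cyc

section Comp
open Function
open Fin.CommRing

/-- `x` is a vertex of `D` lying in component `c` of the induced graph. -/
def inComp {V : Type} (G : SimpleGraph V) (D : Set V)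
    (c : (G.induce D).ConnectedComponent) (x : V) : Prop :=
  ∃ hx : x ∈ D, (G.induce D).connectedComponentMk ⟨x, hx⟩ = c

lemma twoNbrs {V : Type} (G : SimpleGraph V) (D : Set V)
    (hcy : ∀ comp : (G.induce D).ConnectedComponent,
      ∃ t : ℕ, 3 ≤ t ∧ Nonempty (((G.induce D).induce comp.supp) ≃g cycleGraph t))
    (x : V) (hx : x ∈ D) :
    ∃ y z, y ≠ z ∧ G.Adj x y ∧ G.Adj x z ∧ y ∈ D ∧ z ∈ D := by
  set c := (G.induce D).connectedComponentMk ⟨x, hx⟩ with hc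
  obtain ⟨k, hk, f, finj, fmem, fsurj, fadj⟩ := cycData G D c (hcy c)
  obtain ⟨u, rfl⟩ := fsurj x hx rfl
  refine ⟨f (u + 1), f (u - 1), ?_, ?_, ?_, (fmem (u+1)).1, (fmem (u-1)).1⟩
  · intro h
    have h2 : u + 1 = u - 1 := finj h
    have h3 : u + 1 + 1 = u := by rw [h2]; ring
    have h6 : u + 2 = u + 0 := by
      calc u + 2 = u + 1 + 1 := by ring
        _ = u := h3
        _ = u + 0 := (add_zero u).symm
    have h4 : (2 : Fin (k+2)) = 0 := add_left_cancel h6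
    have h5 : ((2 : Fin (k+2)) : ℕ) = 2 % (k+2) := Fin.coe_ofNat_eq_mod _ _
    rw [h4, Nat.mod_eq_of_lt (by omega)] at h5
    simp at h5
  · rw [fadj]; right; ring
  · rw [fadj]; left; ring

lemma parkVert {V : Type} (G : SimpleGraph V) (hcf : ClawFree G) (I J : Set V)
    (hI : Indep G I) (hJ : Indep G J)
    (hcy : ∀ comp : (G.induce (symmDiff I J)).ConnectedComponent,
      ∃ t : ℕ, 3 ≤ t ∧
        Nonempty (((G.induce (symmDiff I J)).induce comp.supp) ≃g cycleGraph t))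
    (v : V) (hvI : v ∉ I) (hvadjI : ∀ u ∈ I, ¬ G.Adj v u) :
    v ∉ J ∧ ∀ b, b ∈ J → b ∉ I → ¬ G.Adj v b := by
  have nbrI : ∀ x y, x ∈ symmDiff I J → x ∈ J → G.Adj x y → y ∈ symmDiff I J → y ∈ I := by
    intro x y hxD hxJ hadj hyD
    rcases Set.mem_symmDiff.mp hyD with ⟨hyI, -⟩ | ⟨hyJ, -⟩
    · exact hyI
    · exact absurd hadj (hJ x hxJ y hyJ)
  constructor
  · intro hvJ
    have hvD : v ∈ symmDiff I J := Set.mem_symmDiff.mpr (Or.inr ⟨hvJ, hvI⟩)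
    obtain ⟨y, z, -, hady, -, hyD, -⟩ := twoNbrs G _ hcy v hvD
    exact hvadjI y (nbrI v y hvD hvJ hady hyD) hady
  · intro b hbJ hbI hadj
    have hbD : b ∈ symmDiff I J := Set.mem_symmDiff.mpr (Or.inr ⟨hbJ, hbI⟩)
    obtain ⟨y, z, hyz, hady, hadz, hyD, hzD⟩ := twoNbrs G _ hcy b hbD
    have hyI : y ∈ I := nbrI b y hbD hbJ hady hyD
    have hzI : z ∈ I := nbrI b z hbD hbJ hadz hzD
    exact hcf ⟨b, v, y, z, hadj.symm, hady, hadz,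
      fun h => hvI (h ▸ hyI), fun h => hvI (h ▸ hzI), hyz,
      fun h => hvadjI y hyI h, fun h => hvadjI z hzI h,
      fun h => hI y hyI z hzI h⟩

end Comp

section CompData
open Function
open Fin.CommRing

lemma compData {V : Type} (G : SimpleGraph V) (I J : Set V)
    (hI : Indep G I) (hJ : Indep G J)
    (c : (G.induce (symmDiff I J)).ConnectedComponent)
    (h : ∃ t : ℕ, 3 ≤ t ∧
      Nonempty (((G.induce (symmDiff I J)).induce c.supp) ≃g cycleGraph t)) :
    ∃ (m : ℕ) (a b : Fin m → V), 1 ≤ m ∧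
      Function.Injective a ∧ Function.Injective b ∧
      (∀ i, inComp G (symmDiff I J) c (a i) ∧ a i ∈ I) ∧
      (∀ i, inComp G (symmDiff I J) c (b i) ∧ b i ∈ J ∧ b i ∉ I) ∧
      (∀ x, inComp G (symmDiff I J) c x → x ∈ I → ∃ i, a i = x) ∧
      (∀ x, inComp G (symmDiff I J) c x → x ∈ J → ∃ i, b i = x) ∧
      (∀ (i : Fin m) (w : V), inComp G (symmDiff I J) c w → w ∈ I → G.Adj (b i) w →
        ∃ j : Fin m, j.val ≤ i.val + 1 ∧ w = a j) := by
  classical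
  obtain ⟨k, hk, f, finj, fmem, fsurj, fadj⟩ := cycData G (symmDiff I J) c h
  have hmemIJ : ∀ x, x ∈ symmDiff I J → (x ∈ I ∧ x ∉ J) ∨ (x ∈ J ∧ x ∉ I) :=
    fun x hx => Set.mem_symmDiff.mp hx
  have opp : ∀ u w, G.Adj (f u) (f w) → (f u ∈ I ↔ f w ∉ I) := by
    intro u w hadj
    rcases hmemIJ _ (fmem u).1 with ⟨h1, h2⟩ | ⟨h1, h2⟩ <;>
      rcases hmemIJ _ (fmem w).1 with ⟨h3, h4⟩ | ⟨h3, h4⟩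
    · exact absurd hadj (hI _ h1 _ h3)
    · exact iff_of_true h1 h4
    · exact iff_of_false h2 (not_not_intro h3)
    · exact absurd hadj (hJ _ h1 _ h3)
  have adjsucc : ∀ u : Fin (k+2), G.Adj (f u) (f (u+1)) :=
    fun u => (fadj u (u+1)).mpr (Or.inr (by ring))
  have hu0ex : ∃ u0, f u0 ∈ I := by
    rcases hmemIJ _ (fmem 0).1 with ⟨h1, -⟩ | ⟨h1, h2⟩
    · exact ⟨0, h1⟩
    · refine ⟨1, ?_⟩
      have hadj01 : G.Adj (f 0) (f 1) := by
        have := adjsucc 0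
        rwa [zero_add] at this
      have := opp 0 1 hadj01
      tauto
  obtain ⟨u0, hu0⟩ := hu0ex
  set g : Fin (k+2) → V := fun u => f (u + u0) with hg
  have ginj : Function.Injective g := fun u w huw => add_right_cancel (finj huw)
  have gadj : ∀ u w, G.Adj (g u) (g w) ↔ (u - w = 1 ∨ w - u = 1) := by
    intro u w
    simp only [hg]
    rw [fadj, show (u+u0)-(w+u0) = u - w from by ring,
      show (w+u0)-(u+u0) = w - u from by ring]
  have gmem : ∀ u, inComp G (symmDiff I J) c (g u) := fun u => fmem (u + u0)
  have gsurj : ∀ x, inComp G (symmDiff I J) c x → ∃ u, g u = x := by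
    intro x hx
    obtain ⟨hxD, hc⟩ := hx
    obtain ⟨u, rfl⟩ := fsurj x hxD hc
    refine ⟨u - u0, ?_⟩
    simp only [hg]
    rw [sub_add_cancel]
  have oppg : ∀ u w, G.Adj (g u) (g w) → (g u ∈ I ↔ g w ∉ I) :=
    fun u w huw => opp (u + u0) (w + u0) huw
  have g0 : g 0 ∈ I := by
    simp only [hg]
    rw [zero_add]
    exact hu0
  have par : ∀ p (hp : p < k+2), (g ⟨p, hp⟩ ∈ I ↔ Even p) := by
    intro p
    induction p with
    | zero =>
      intro hp
      have h0 : (⟨0, hp⟩ : Fin (k+2)) = 0 := by ext; simp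
      rw [h0]
      exact iff_of_true g0 Even.zero
    | succ q ih =>
      intro hp
      have hq : q < k+2 := by omega
      have hstep : (⟨q, hq⟩ : Fin (k+2)) + 1 = ⟨q+1, hp⟩ := by
        apply Fin.ext
        rw [Fin.add_def, Fin.val_one]
        show (q + 1) % (k+2) = q + 1
        exact Nat.mod_eq_of_lt hp
      have hadjq : G.Adj (g ⟨q, hq⟩) (g ⟨q+1, hp⟩) := by
        rw [← hstep]
        exact (gadj _ _).mpr (Or.inr (by ring))
      rw [Nat.even_add_one, ← ih hq]
      have := oppg _ _ hadjq
      tauto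
  have hlaststep : (⟨k+1, by omega⟩ : Fin (k+2)) + 1 = 0 := by
    apply Fin.ext
    rw [Fin.add_def, Fin.val_one]
    simp only [Fin.val_zero]
    show (k+2) % (k+2) = 0
    exact Nat.mod_self _
  have hlastadj : G.Adj (g ⟨k+1, by omega⟩) (g 0) := by
    refine (gadj _ _).mpr (Or.inr ?_)
    rw [← hlaststep]; ring
  have hkodd : ¬ Even (k+1) := by
    intro he
    have h1 := (par (k+1) (by omega)).mpr he
    have h2 := oppg _ _ hlastadj
    exact (h2.mp h1) g0
  obtain ⟨m, hm⟩ : ∃ m, k + 2 = 2*m := by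
    rcases (Nat.even_add_one.mpr hkodd : Even (k+2)) with ⟨m, hmm⟩
    exact ⟨m, by omega⟩
  have hm1 : 1 ≤ m := by omega
  refine ⟨m, fun i => g ⟨2*i.val, by omega⟩, fun i => g ⟨2*i.val+1, by omega⟩, hm1,
    ?_, ?_, ?_, ?_, ?_, ?_, ?_⟩
  · intro i j hij
    have h2 : 2*i.val = 2*j.val := congrArg Fin.val (ginj hij)
    exact Fin.ext (by omega)
  · intro i j hij
    have h2 : 2*i.val+1 = 2*j.val+1 := congrArg Fin.val (ginj hij)
    exact Fin.ext (by omega)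
  · intro i
    exact ⟨gmem _, (par (2*i.val) (by omega)).mpr ⟨i.val, two_mul i.val⟩⟩
  · intro i
    have hbI : g ⟨2*i.val+1, by omega⟩ ∉ I := by
      intro hmem
      obtain ⟨r, hr⟩ := (par (2*i.val+1) (by omega)).mp hmem
      omega
    refine ⟨gmem _, ?_, hbI⟩
    rcases hmemIJ _ (gmem ⟨2*i.val+1, by omega⟩).1 with ⟨h1, -⟩ | ⟨h1, -⟩
    · exact absurd h1 hbI
    · exact h1
  · intro x hx hxI
    obtain ⟨u, rfl⟩ := gsurj x hx
    have hev : Even u.val := (par u.val u.isLt).mp hxI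
    obtain ⟨r, hr⟩ := hev
    refine ⟨⟨r, by omega⟩, congrArg g (Fin.ext (show 2*r = u.val by omega))⟩
  · intro x hx hxJ
    obtain ⟨u, rfl⟩ := gsurj x hx
    have hnI : g u ∉ I := by
      rcases hmemIJ _ (gmem u).1 with ⟨-, h2⟩ | ⟨-, h2⟩
      · exact absurd hxJ h2
      · exact h2
    have hne : ¬ Even u.val := fun he => hnI ((par u.val u.isLt).mpr he)
    obtain ⟨r, hr⟩ := Nat.not_even_iff_odd.mp hne
    refine ⟨⟨r, by omega⟩, congrArg g (Fin.ext (show 2*r+1 = u.val by omega))⟩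
  · intro i w hw hwI hadj
    obtain ⟨u, rfl⟩ := gsurj w hw
    have hp2 : 2*i.val+1 < k+2 := by omega
    set p : Fin (k+2) := ⟨2*i.val+1, hp2⟩ with hpdef
    have hq : (⟨2*i.val, by omega⟩ : Fin (k+2)) + 1 = p := by
      apply Fin.ext
      rw [Fin.add_def, Fin.val_one]
      show (2*i.val + 1) % (k+2) = 2*i.val+1
      exact Nat.mod_eq_of_lt hp2
    rcases (gadj p u).mp hadj with hcase | hcase
    · -- p - u = 1, so u = p - 1 = a-position 2*i
      have hu : u = ⟨2*i.val, by omega⟩ := by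
        have hu1 : u = p - 1 := by rw [← hcase]; ring
        rw [hu1, ← hq]; ring
      exact ⟨i, by omega, congrArg g hu⟩
    · -- u - p = 1, so u = p + 1
      have hu : u = p + 1 := by rw [← hcase]; ring
      have hval : u.val = (2*i.val + 2) % (k+2) := by
        rw [hu, Fin.add_def, Fin.val_one]
      by_cases him : i.val + 1 < m
      · have huv : u.val = 2*(i.val+1) := by
          rw [hval, Nat.mod_eq_of_lt (by omega)]
          ring
        exact ⟨⟨i.val+1, him⟩, Nat.le_refl _,
          congrArg g (Fin.ext (show u.val = 2*(i.val+1) from huv))⟩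
      · have huv : u.val = 0 := by
          rw [hval, show 2*i.val+2 = k+2 by omega, Nat.mod_self]
        exact ⟨⟨0, by omega⟩, Nat.zero_le _,
          congrArg g (Fin.ext (show u.val = 2*0 by omega))⟩

end CompData

set_option maxHeartbeats 1000000 in
/-- If `I` is not dominating and `G[I △ J]` is a disjoint union of cycles, then there is
a TJ-sequence from `I` to `J`. -/
theorem stmt_11 {V : Type} [Fintype V] [DecidableEq V] (G : SimpleGraph V)
    (hcf : ClawFree G) (I J : Set V) (hI : Indep G I) (hJ : Indep G J)
    (hnotdom : ∃ v : V, v ∉ I ∧ ∀ u ∈ I, ¬ G.Adj v u)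
    (hcyc : ∀ comp : (G.induce (symmDiff I J)).ConnectedComponent,
      ∃ t : ℕ, 3 ≤ t ∧
        Nonempty (((G.induce (symmDiff I J)).induce comp.supp) ≃g cycleGraph t)) :
    TJReach G I J := by
  classical
  obtain ⟨v, hvI, hvadjI⟩ := hnotdom
  obtain ⟨hvJ, hvBadj⟩ := parkVert G hcf I J hI hJ hcyc v hvI hvadjI
  haveI : Finite ↥(symmDiff I J) := Subtype.finite
  haveI : Fintype (G.induce (symmDiff I J)).ConnectedComponent := Fintype.ofFinite _
  set Ds : Finset ((G.induce (symmDiff I J)).ConnectedComponent) → Set V :=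
    fun s => {x | ∃ c ∈ s, inComp G (symmDiff I J) c x} with hDs
  set K : Finset ((G.induce (symmDiff I J)).ConnectedComponent) → Set V :=
    fun s => (I \ Ds s) ∪ (J ∩ Ds s) with hK
  have hIC : ∀ c x, inComp G (symmDiff I J) c x → x ∈ symmDiff I J := fun c x hx => hx.1
  have hICuniq : ∀ c c' x, inComp G (symmDiff I J) c x → inComp G (symmDiff I J) c' x →
      c = c' := by
    rintro c c' x ⟨hx, h1⟩ ⟨hx', h2⟩
    rw [← h1, ← h2]
  have hDsub : ∀ s, Ds s ⊆ symmDiff I J := by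
    rintro s x ⟨c, -, hc⟩
    exact hIC c x hc
  have hsame : ∀ c x y, x ∈ symmDiff I J → y ∈ symmDiff I J → G.Adj x y →
      inComp G (symmDiff I J) c x → inComp G (symmDiff I J) c y := by
    rintro c x y hx hy hadj ⟨hx', hc⟩
    have hadj' : (G.induce (symmDiff I J)).Adj ⟨x, hx⟩ ⟨y, hy⟩ := hadj
    refine ⟨hy, ?_⟩
    rw [← hc]
    exact ConnectedComponent.sound hadj'.symm.reachable
  have hJD : ∀ y, y ∈ J → y ∈ symmDiff I J → y ∉ I := by
    intro y hyJ hyD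
    rcases Set.mem_symmDiff.mp hyD with ⟨-, h2⟩ | ⟨-, h2⟩
    · exact absurd hyJ h2
    · exact h2
  have hID : ∀ y, y ∈ I → y ∉ symmDiff I J → y ∈ J := by
    intro y hyI hyD
    by_contra hyJ
    exact hyD (Set.mem_symmDiff.mpr (Or.inl ⟨hyI, hyJ⟩))
  have hKindep : ∀ s, Indep G (K s) := by
    intro s x hx y hy hadj
    have key : ∀ a b, a ∈ I \ Ds s → b ∈ J ∩ Ds s → ¬ G.Adj a b := by
      rintro a b ⟨haI, haDs⟩ ⟨hbJ, hbDs⟩ hab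
      have hbD : b ∈ symmDiff I J := hDsub s hbDs
      by_cases haD : a ∈ symmDiff I J
      · obtain ⟨cb, hcb, hbc⟩ := hbDs
        exact haDs ⟨cb, hcb, hsame cb b a hbD haD hab.symm hbc⟩
      · exact hJ a (hID a haI haD) b hbJ hab
    rcases hx with ⟨hx1, hx2⟩ | ⟨hx1, hx2⟩ <;> rcases hy with ⟨hy1, hy2⟩ | ⟨hy1, hy2⟩
    · exact hI x hx1 y hy1 hadj
    · exact key x y ⟨hx1, hx2⟩ ⟨hy1, hy2⟩ hadj
    · exact key y x ⟨hy1, hy2⟩ ⟨hx1, hx2⟩ hadj.symm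
    · exact hJ x hx1 y hy1 hadj
  have hstep : ∀ (c : (G.induce (symmDiff I J)).ConnectedComponent)
      (s : Finset ((G.induce (symmDiff I J)).ConnectedComponent)), c ∉ s →
      TJReach G (K s) (K (insert c s)) := by
    intro c s hc
    obtain ⟨m, a, b, hm1, hainj, hbinj, hamem, hbmem, hasurj, hbsurj, hbKadj⟩ :=
      compData G I J hI hJ c (hcyc c)
    have hPnotDs : ∀ x, inComp G (symmDiff I J) c x → x ∉ Ds s := by
      rintro x hx ⟨c', hc', hx'⟩
      exact hc ((hICuniq c c' x hx hx') ▸ hc')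
    have haK : ∀ i, a i ∈ K s := by
      intro i
      exact Or.inl ⟨(hamem i).2, hPnotDs _ (hamem i).1⟩
    have hbnI : ∀ i, b i ∉ I := fun i => (hbmem i).2.2
    have hbJ' : ∀ i, b i ∈ J := fun i => (hbmem i).2.1
    have hbK : ∀ i, b i ∉ K s := by
      rintro i (⟨h1, -⟩ | ⟨-, h2⟩)
      · exact hbnI i h1
      · exact hPnotDs _ (hbmem i).1 h2
    have hvK : v ∉ K s := by
      rintro (⟨h1, -⟩ | ⟨h1, -⟩)
      · exact hvI h1
      · exact hvJ h1
    have hvadjK : ∀ w, w ∈ K s → ¬ G.Adj v w := by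
      rintro w (⟨h1, -⟩ | ⟨h1, h2⟩) hadj
      · exact hvadjI w h1 hadj
      · exact hvBadj w h1 (hJD w h1 (hDsub s h2)) hadj
    have hbKadj' : ∀ (i : Fin m) (w : V), w ∈ K s → G.Adj (b i) w →
        ∃ j : Fin m, j.val ≤ i.val + 1 ∧ w = a j := by
      rintro i w (⟨h1, -⟩ | ⟨h1, -⟩) hadj
      · by_cases hwD : w ∈ symmDiff I J
        · exact hbKadj i w (hsame c (b i) w (hIC c _ (hbmem i).1) hwD hadj (hbmem i).1)
            h1 hadj
        · exact absurd hadj (hJ (b i) (hbJ' i) w (hID w h1 hwD))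
      · exact absurd hadj (hJ (b i) (hbJ' i) w h1)
    have hreach := rot G (K s) v m hm1 a b (hKindep s) hainj hbinj haK hbK hvK
      (fun i h => hvJ (h ▸ hbJ' i))
      hvadjK
      (fun i => hvBadj (b i) (hbJ' i) (hbnI i))
      (fun i j => hJ _ (hbJ' i) _ (hbJ' j))
      hbKadj'
    have hDins : ∀ x, x ∈ Ds (insert c s) ↔
        (inComp G (symmDiff I J) c x ∨ x ∈ Ds s) := by
      intro x
      constructor
      · rintro ⟨c', hc', hx⟩
        rcases Finset.mem_insert.mp hc' with rfl | h'
        · exact Or.inl hx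
        · exact Or.inr ⟨c', h', hx⟩
      · rintro (hx | ⟨c', hc', hx⟩)
        · exact ⟨c, Finset.mem_insert_self c s, hx⟩
        · exact ⟨c', Finset.mem_insert_of_mem hc', hx⟩
    have hKeq : (K s \ Set.range a) ∪ Set.range b = K (insert c s) := by
      ext x
      have hra : x ∈ Set.range a ↔ (inComp G (symmDiff I J) c x ∧ x ∈ I) := by
        constructor
        · rintro ⟨i, rfl⟩; exact ⟨(hamem i).1, (hamem i).2⟩
        · rintro ⟨h1, h2⟩
          obtain ⟨i, hi⟩ := hasurj x h1 h2
          exact ⟨i, hi⟩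
      have hrb : x ∈ Set.range b ↔ (inComp G (symmDiff I J) c x ∧ x ∈ J) := by
        constructor
        · rintro ⟨i, rfl⟩; exact ⟨(hbmem i).1, (hbmem i).2.1⟩
        · rintro ⟨h1, h2⟩
          obtain ⟨i, hi⟩ := hbsurj x h1 h2
          exact ⟨i, hi⟩
      have hps := hPnotDs x
      simp only [hK, Set.mem_union, Set.mem_diff, Set.mem_inter_iff, hra, hrb, hDins]
      constructor
      · rintro (⟨(⟨hA, hS⟩ | ⟨hB, hS⟩), hnPA⟩ | ⟨hP, hB⟩)
        · exact Or.inl ⟨hA, fun h => h.elim (fun hP => hnPA ⟨hP, hA⟩) hS⟩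
        · exact Or.inr ⟨hB, Or.inr hS⟩
        · exact Or.inr ⟨hB, Or.inl hP⟩
      · rintro (⟨hA, hnPS⟩ | ⟨hB, hPS⟩)
        · exact Or.inl ⟨Or.inl ⟨hA, fun hS => hnPS (Or.inr hS)⟩,
            fun h => hnPS (Or.inl h.1)⟩
        · rcases hPS with hP | hS
          · exact Or.inr ⟨hP, hB⟩
          · exact Or.inl ⟨Or.inr ⟨hB, hS⟩, fun h => hps h.1 hS⟩
    rw [hKeq] at hreach
    exact hreach
  have main : ∀ s : Finset ((G.induce (symmDiff I J)).ConnectedComponent),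
      TJReach G I (K s) := by
    intro s
    induction s using Finset.induction_on with
    | empty =>
      have : K ∅ = I := by
        ext x
        simp [hK, hDs]
      rw [this]
      exact Relation.ReflTransGen.refl
    | @insert c s hc ih =>
      exact Relation.ReflTransGen.trans ih (hstep c s hc)
  have huniv : K Finset.univ = J := by
    have hDuniv : ∀ x, x ∈ symmDiff I J ↔ x ∈ Ds Finset.univ := by
      intro x
      constructor
      · intro hx
        exact ⟨(G.induce (symmDiff I J)).connectedComponentMk ⟨x, hx⟩,
          Finset.mem_univ _, hx, rfl⟩
      · intro hx
        exact hDsub _ hx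
    ext x
    simp only [hK, Set.mem_union, Set.mem_diff, Set.mem_inter_iff, ← hDuniv]
    constructor
    · rintro (⟨h1, h2⟩ | ⟨h1, -⟩)
      · exact hID x h1 h2
      · exact h1
    · intro hxJ
      by_cases hxD : x ∈ symmDiff I J
      · exact Or.inr ⟨hxJ, hxD⟩
      · refine Or.inl ⟨?_, hxD⟩
        by_contra hxI
        exact hxD (Set.mem_symmDiff.mpr (Or.inr ⟨hxJ, hxI⟩))
  have := main Finset.univ
  rwa [huniv] at this
end
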